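/- arXiv:1706.05907 — 4 statements merged into one kernel-verified Lean document; each statement's English description precedes it below -/
import Mathlib

section
/- Let p, N be positive integers, η = {1,...,N}, and let L² be the Hilbert space of square-integrable complex functions on [0,1)^N. With 𝒟_α(i,m) defined as in the context, if α ⊆ η and i, q ∈ P_η satisfy i_{η∖α} = q_{η∖α}, then for all m, r ∈ P_α: 𝒟_α(i, m)·𝒟_α(q, r) = δ(m, q_α)·𝒟_α(i, r), where δ(m, q_α) = 1 if m = q_α and 0 otherwise. In particular, for fixed α and fixed values on η∖α the operators 𝒟_α form a system of matrix units indexed by P_α × P_α. -/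
open MeasureTheory

/-- The cube `[0,1)^ι` with Lebesgue measure, modelled as the product of the
Lebesgue measure on `ℝ` restricted to `[0,1)` over each coordinate. -/
noncomputable def cubeMeasure (ι : Type*) [Fintype ι] : Measure (ι → ℝ) :=
  Measure.pi fun _ => (volume : Measure ℝ).restrict (Set.Ico 0 1)

/-- The step function `χ_r` (for `r ∈ {1,...,p}` encoded as `r : Fin p`, so that
`χ_r` is the indicator of `[r/p, (r+1)/p) = [(r'-1)/p, r'/p)` for `r' = r+1`). -/
noncomputable def chi (p : ℕ) (r : Fin p) (y : ℝ) : ℂ :=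
  if (r : ℝ) / p ≤ y ∧ y < ((r : ℝ) + 1) / p then 1 else 0


/-- `𝒞_α(i,m) = (Π_{j ∈ η} 𝒜_{i_j j}) · (Π_{j ∈ α} ℬ_{m_j j})`, the products being
taken in the order of increasing indices.  Multi-indices `i ∈ P_η` and `m ∈ P_α`
are encoded as functions `Fin N → Fin p` (the operator only uses the values of `m`
on `α`). -/
noncomputable def Cop {p N : ℕ}
    (A B : Fin p → Fin N →
      (Lp ℂ 2 (cubeMeasure (Fin N)) →L[ℂ] Lp ℂ 2 (cubeMeasure (Fin N))))
    (α : Finset (Fin N)) (i m : Fin N → Fin p) :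
    Lp ℂ 2 (cubeMeasure (Fin N)) →L[ℂ] Lp ℂ 2 (cubeMeasure (Fin N)) :=
  (((List.finRange N).map fun j => A (i j) j).prod) *
    (((α.sort (· ≤ ·)).map fun j => B (m j) j).prod)

/-- `𝒟_α(i,m) = 𝒞_α(i,m) · Π_{j ∈ η∖α} (1 − ℬ_{i_j j})`. -/
noncomputable def Dop {p N : ℕ}
    (A B : Fin p → Fin N →
      (Lp ℂ 2 (cubeMeasure (Fin N)) →L[ℂ] Lp ℂ 2 (cubeMeasure (Fin N))))
    (α : Finset (Fin N)) (i m : Fin N → Fin p) :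
    Lp ℂ 2 (cubeMeasure (Fin N)) →L[ℂ] Lp ℂ 2 (cubeMeasure (Fin N)) :=
  Cop A B α i m *
    ((((Finset.univ \ α).sort (· ≤ ·)).map fun j => 1 - B (i j) j).prod)

namespace Stmt9

noncomputable abbrev mu0 : Measure ℝ := (volume : Measure ℝ).restrict (Set.Ico (0:ℝ) 1)

instance instProbMu0 : IsProbabilityMeasure ((volume : Measure ℝ).restrict (Set.Ico (0:ℝ) 1)) := by
  constructor
  rw [Measure.restrict_apply_univ, Real.volume_Ico]
  norm_num

instance (ι : Type*) [Fintype ι] : IsProbabilityMeasure (cubeMeasure ι) := by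
  unfold cubeMeasure; infer_instance

lemma chi_mul {p : ℕ} (a b : Fin p) (y : ℝ) :
    chi p a y * chi p b y = if a = b then chi p a y else 0 := by
  have hp : (0:ℝ) < p := by exact_mod_cast a.pos
  have key : ∀ (c d : Fin p), (c:ℕ) < (d:ℕ) →
      ¬((((c:ℝ)) / p ≤ y ∧ y < ((c:ℝ) + 1) / p) ∧ (((d:ℝ)) / p ≤ y ∧ y < ((d:ℝ) + 1) / p)) := by
    rintro c d hcd ⟨⟨_, h2⟩, h3, _⟩
    have h1 : ((c:ℝ) + 1) ≤ (d:ℝ) := by exact_mod_cast hcd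
    have h4 : ((c:ℝ) + 1) / p ≤ (d:ℝ) / p := by gcongr
    linarith
  rcases eq_or_ne a b with rfl | hab
  · rw [if_pos rfl]
    unfold chi; split <;> simp
  · rw [if_neg hab]
    unfold chi
    rcases Ne.lt_or_gt (fun h : (a:ℕ) = (b:ℕ) => hab (Fin.ext h)) with h | h
    · split_ifs with h1 h2
      · exact absurd ⟨h1, h2⟩ (key a b h)
      all_goals simp
    · split_ifs with h1 h2
      · exact absurd ⟨h2, h1⟩ (key b a h)
      all_goals simp

lemma measurable_chi {p : ℕ} (a : Fin p) : Measurable (chi p a) := by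
  unfold chi
  exact Measurable.ite
    (show MeasurableSet (Set.Ico ((a:ℝ)/p) (((a:ℝ)+1)/p)) from measurableSet_Ico)
    measurable_const measurable_const

lemma norm_chi_le {p : ℕ} (a : Fin p) (y : ℝ) : ‖chi p a y‖ ≤ 1 := by
  unfold chi; split <;> simp

lemma chi_integral {p : ℕ} (a : Fin p) :
    ∫ x in Set.Ico (0:ℝ) 1, chi p a x = ((p:ℂ))⁻¹ := by
  have hp : (0:ℝ) < p := by exact_mod_cast a.pos
  have hsub : Set.Ico ((a:ℝ)/p) (((a:ℝ)+1)/p) ⊆ Set.Ico (0:ℝ) 1 := by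
    apply Set.Ico_subset_Ico
    · positivity
    · rw [div_le_one hp]
      have : (a:ℝ) + 1 ≤ p := by exact_mod_cast a.is_lt
      linarith
  have hchi : chi p a = (Set.Ico ((a:ℝ)/p) (((a:ℝ)+1)/p)).indicator (fun _ => (1:ℂ)) := by
    funext y
    simp only [chi, Set.indicator_apply, Set.mem_Ico]
  rw [hchi, setIntegral_indicator measurableSet_Ico,
    Set.inter_eq_right.mpr hsub, setIntegral_const, Real.volume_real_Ico]
  have : ((a:ℝ)+1)/p - (a:ℝ)/p = 1/p := by field_simp; ring
  rw [this, max_eq_left (by positivity)]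
  simp [Complex.ofReal_inv]


lemma measurable_upd {N : ℕ} (j : Fin N) :
    Measurable (fun q : (Fin N → ℝ) × ℝ => Function.update q.1 j q.2) :=
  measurable_update'.comp (measurable_fst.prodMk measurable_snd)

lemma updMP {N : ℕ} (j : Fin N) :
    MeasurePreserving (fun q : (Fin N → ℝ) × ℝ => Function.update q.1 j q.2)
      ((cubeMeasure (Fin N)).prod mu0) (cubeMeasure (Fin N)) := by
  refine ⟨measurable_upd j, ?_⟩
  show _ = cubeMeasure (Fin N)
  unfold cubeMeasure
  refine (Measure.pi_eq fun s hs => ?_).symm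
  rw [Measure.map_apply (measurable_upd j) (MeasurableSet.univ_pi hs)]
  have hpre : (fun q : (Fin N → ℝ) × ℝ => Function.update q.1 j q.2) ⁻¹' (Set.pi Set.univ s)
      = (Set.pi Set.univ (Function.update s j Set.univ)) ×ˢ (s j) := by
    ext ⟨k, x⟩
    simp only [Set.mem_preimage, Set.mem_pi, Set.mem_univ, true_implies, Set.mem_prod]
    constructor
    · intro h
      refine ⟨fun i => ?_, by simpa using h j⟩
      rcases eq_or_ne i j with rfl | hij
      · simp
      · simpa [Function.update_of_ne hij] using h i
    · rintro ⟨h1, h2⟩ i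
      rcases eq_or_ne i j with rfl | hij
      · simpa using h2
      · simpa [Function.update_of_ne hij] using h1 i
  rw [hpre, Measure.prod_prod, Measure.pi_pi]
  have : (fun i => mu0 (Function.update s j Set.univ i))
      = Function.update (fun i => mu0 (s i)) j (mu0 Set.univ) := by
    funext i
    exact Function.apply_update (fun _ t => mu0 t) s j Set.univ i
  show (∏ i, mu0 (Function.update s j Set.univ i)) * mu0 (s j) = ∏ i, mu0 (s i)
  rw [this]
  rw [Finset.prod_update_of_mem (Finset.mem_univ j)]
  rw [show mu0 Set.univ = (1 : ENNReal) from measure_univ]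
  rw [one_mul]
  rw [Finset.sdiff_singleton_eq_erase]
  exact Finset.prod_erase_mul Finset.univ (fun i => mu0 (s i)) (Finset.mem_univ j)

lemma ae_update {N : ℕ} {f g : (Fin N → ℝ) → ℂ} (h : f =ᵐ[cubeMeasure (Fin N)] g) (j : Fin N) :
    ∀ᵐ k ∂cubeMeasure (Fin N), ∀ᵐ x ∂mu0,
      f (Function.update k j x) = g (Function.update k j x) := by
  have h' : f ∘ (fun q : (Fin N → ℝ) × ℝ => Function.update q.1 j q.2)
      =ᵐ[(cubeMeasure (Fin N)).prod mu0]
      g ∘ (fun q : (Fin N → ℝ) × ℝ => Function.update q.1 j q.2) := by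
    refine ae_eq_comp (measurable_upd j).aemeasurable ?_
    rwa [(updMP j).map_eq]
  exact Measure.ae_ae_of_ae_prod h'


section ops
variable {p N : ℕ}
  {A B : Fin p → Fin N → (Lp ℂ 2 (cubeMeasure (Fin N)) →L[ℂ] Lp ℂ 2 (cubeMeasure (Fin N)))}
  (hA : ∀ (i : Fin p) (j : Fin N) (u : Lp ℂ 2 (cubeMeasure (Fin N))),
      ⇑(A i j u) =ᵐ[cubeMeasure (Fin N)] fun k => chi p i (k j) * u k)
  (hB : ∀ (i : Fin p) (j : Fin N) (u : Lp ℂ 2 (cubeMeasure (Fin N))),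
      ⇑(B i j u) =ᵐ[cubeMeasure (Fin N)] fun k =>
        (p : ℂ) * ∫ x in Set.Ico (0 : ℝ) 1, chi p i x * u (Function.update k j x))

include hA in
lemma opAA (a b : Fin p) (j : Fin N) :
    A a j * A b j = if a = b then A a j else 0 := by
  have key : ∀ u, ⇑(A a j (A b j u)) =ᵐ[cubeMeasure (Fin N)]
      fun k => (if a = b then chi p a (k j) else 0) * u k := by
    intro u
    filter_upwards [hA a j (A b j u), (hA b j u).mono fun k hk => hk] with k hk1 hk2
    rw [hk1, hk2, ← mul_assoc, chi_mul]
  rcases eq_or_ne a b with rfl | hab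
  · rw [if_pos rfl]
    ext u
    rw [ContinuousLinearMap.mul_apply]
    refine ((key u).trans ?_).trans (hA a j u).symm
    filter_upwards with k
    simp
  · rw [if_neg hab]
    ext u
    rw [ContinuousLinearMap.mul_apply, ContinuousLinearMap.zero_apply]
    refine (key u).trans ?_
    refine (Lp.coeFn_zero ℂ 2 (cubeMeasure (Fin N))).symm.mono fun k hk => ?_
    rw [← hk]
    simp [hab]

include hA hB in
lemma opBA (m a : Fin p) (j : Fin N) :
    B m j * A a j = if m = a then B a j else 0 := by
  have key : ∀ u, ⇑(B m j (A a j u)) =ᵐ[cubeMeasure (Fin N)]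
      fun k => (p : ℂ) * ∫ x in Set.Ico (0:ℝ) 1,
          (if m = a then chi p m x else 0) * u (Function.update k j x) := by
    intro u
    filter_upwards [hB m j (A a j u), ae_update (hA a j u) j] with k hk1 hk2
    rw [hk1]
    congr 1
    refine integral_congr_ae (hk2.mono fun x hx => ?_)
    dsimp only
    rw [hx, Function.update_self, ← mul_assoc, chi_mul]
  rcases eq_or_ne m a with rfl | hma
  · rw [if_pos rfl]
    ext u
    rw [ContinuousLinearMap.mul_apply]
    refine ((key u).trans ?_).trans (hB m j u).symm
    filter_upwards with k
    simp
  · rw [if_neg hma]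
    ext u
    rw [ContinuousLinearMap.mul_apply, ContinuousLinearMap.zero_apply]
    refine (key u).trans ?_
    refine (Lp.coeFn_zero ℂ 2 (cubeMeasure (Fin N))).symm.mono fun k hk => ?_
    rw [← hk]
    simp [hma]

include hB in
lemma opBB (m r : Fin p) (j : Fin N) :
    B m j * B r j = B r j := by
  have hp0 : ((p : ℂ)) ≠ 0 := Nat.cast_ne_zero.mpr m.pos.ne'
  ext u
  rw [ContinuousLinearMap.mul_apply]
  have hs := ae_update (hB r j u) j
  simp only [Function.update_idem] at hs
  filter_upwards [hB m j (B r j u), hs, hB r j u] with k hk1 hk2 hk3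
  rw [hk1, hk3]
  have : ∫ x in Set.Ico (0:ℝ) 1, chi p m x * (B r j u) (Function.update k j x)
      = ∫ x in Set.Ico (0:ℝ) 1, chi p m x *
        ((p : ℂ) * ∫ y in Set.Ico (0:ℝ) 1, chi p r y * u (Function.update k j y)) := by
    refine integral_congr_ae (hk2.mono fun x hx => ?_)
    dsimp only
    rw [hx]
  rw [this, integral_mul_const, chi_integral]
  field_simp

end ops


lemma updMP2 {N : ℕ} {j j' : Fin N} (h : j ≠ j') :
    MeasurePreserving (fun q : (Fin N → ℝ) × (ℝ × ℝ) =>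
        Function.update (Function.update q.1 j q.2.1) j' q.2.2)
      ((cubeMeasure (Fin N)).prod (mu0.prod mu0)) (cubeMeasure (Fin N)) := by
  have h1 : MeasurePreserving (MeasurableEquiv.prodAssoc.symm)
      ((cubeMeasure (Fin N)).prod (mu0.prod mu0))
      (((cubeMeasure (Fin N)).prod mu0).prod mu0) :=
    (measurePreserving_prodAssoc (cubeMeasure (Fin N)) mu0 mu0).symm MeasurableEquiv.prodAssoc
  have h2 : MeasurePreserving
      (Prod.map (fun q : (Fin N → ℝ) × ℝ => Function.update q.1 j q.2) (id : ℝ → ℝ))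
      (((cubeMeasure (Fin N)).prod mu0).prod mu0) ((cubeMeasure (Fin N)).prod mu0) :=
    (updMP j).prod (MeasurePreserving.id mu0)
  exact ((updMP j').comp h2).comp h1

lemma integrable_slice2 {N : ℕ} {j j' : Fin N} (h : j ≠ j')
    (u : Lp ℂ 2 (cubeMeasure (Fin N))) :
    ∀ᵐ k ∂cubeMeasure (Fin N), Integrable
      (fun z : ℝ × ℝ => u (Function.update (Function.update k j z.1) j' z.2))
      (mu0.prod mu0) := by
  have hu : Integrable (⇑u) (cubeMeasure (Fin N)) :=
    (Lp.memLp u).integrable (by norm_num)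
  have hcomp : Integrable (fun q : (Fin N → ℝ) × (ℝ × ℝ) =>
      u (Function.update (Function.update q.1 j q.2.1) j' q.2.2))
      ((cubeMeasure (Fin N)).prod (mu0.prod mu0)) :=
    ((updMP2 h).integrable_comp (Lp.aestronglyMeasurable u)).mpr hu
  exact hcomp.prod_right_ae

section ops2
variable {p N : ℕ}
  {A B : Fin p → Fin N → (Lp ℂ 2 (cubeMeasure (Fin N)) →L[ℂ] Lp ℂ 2 (cubeMeasure (Fin N)))}
  (hA : ∀ (i : Fin p) (j : Fin N) (u : Lp ℂ 2 (cubeMeasure (Fin N))),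
      ⇑(A i j u) =ᵐ[cubeMeasure (Fin N)] fun k => chi p i (k j) * u k)
  (hB : ∀ (i : Fin p) (j : Fin N) (u : Lp ℂ 2 (cubeMeasure (Fin N))),
      ⇑(B i j u) =ᵐ[cubeMeasure (Fin N)] fun k =>
        (p : ℂ) * ∫ x in Set.Ico (0 : ℝ) 1, chi p i x * u (Function.update k j x))

include hA in
lemma commAA {j j' : Fin N} (h : j ≠ j') (a b : Fin p) :
    Commute (A a j) (A b j') := by
  show A a j * A b j' = A b j' * A a j
  ext u
  rw [ContinuousLinearMap.mul_apply, ContinuousLinearMap.mul_apply]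
  filter_upwards [hA a j (A b j' u), hA b j' u, hA b j' (A a j u), hA a j u]
    with k hk1 hk2 hk3 hk4
  rw [hk1, hk2, hk3, hk4]
  ring

include hA hB in
lemma commAB {j j' : Fin N} (h : j ≠ j') (a b : Fin p) :
    Commute (A a j) (B b j') := by
  show A a j * B b j' = B b j' * A a j
  ext u
  rw [ContinuousLinearMap.mul_apply, ContinuousLinearMap.mul_apply]
  filter_upwards [hA a j (B b j' u), hB b j' u, hB b j' (A a j u),
    ae_update (hA a j u) j'] with k hk1 hk2 hk3 hk4
  rw [hk1, hk2, hk3]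
  have e1 : ∫ x in Set.Ico (0:ℝ) 1, chi p b x * (A a j u) (Function.update k j' x)
      = ∫ x in Set.Ico (0:ℝ) 1, chi p a (k j) * (chi p b x * u (Function.update k j' x)) := by
    refine integral_congr_ae (hk4.mono fun x hx => ?_)
    dsimp only
    rw [hx, Function.update_of_ne h]
    ring
  rw [e1, integral_const_mul]
  ring

include hB in
lemma commBB {j j' : Fin N} (h : j ≠ j') (a b : Fin p) :
    Commute (B a j) (B b j') := by
  show B a j * B b j' = B b j' * B a j
  ext u
  rw [ContinuousLinearMap.mul_apply, ContinuousLinearMap.mul_apply]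
  filter_upwards [hB a j (B b j' u), hB b j' (B a j u),
    ae_update (hB b j' u) j, ae_update (hB a j u) j',
    integrable_slice2 h u] with k hk1 hk2 hk3 hk4 hkI
  rw [hk1, hk2]
  have hI : Integrable (Function.uncurry fun x y : ℝ =>
      chi p a x * (chi p b y * u (Function.update (Function.update k j x) j' y)))
      (mu0.prod mu0) := by
    have hm : AEStronglyMeasurable (fun z : ℝ × ℝ => chi p a z.1 * chi p b z.2)
        (mu0.prod mu0) :=
      (((measurable_chi a).comp measurable_fst).mul
        ((measurable_chi b).comp measurable_snd)).aestronglyMeasurable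
    have hb : ∃ C, ∀ z : ℝ × ℝ, ‖chi p a z.1 * chi p b z.2‖ ≤ C := by
      refine ⟨1, fun z => ?_⟩
      rw [norm_mul]
      exact mul_le_one₀ (norm_chi_le a z.1) (norm_nonneg _) (norm_chi_le b z.2)
    obtain ⟨C, hC⟩ := hb
    have := hkI.bdd_mul hm (Filter.Eventually.of_forall hC)
    have he : (Function.uncurry fun x y : ℝ =>
        chi p a x * (chi p b y * u (Function.update (Function.update k j x) j' y)))
        = fun z : ℝ × ℝ => chi p a z.1 * chi p b z.2 *
            u (Function.update (Function.update k j z.1) j' z.2) := by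
      funext z
      simp [Function.uncurry, mul_assoc]
    rw [he]
    exact this
  have eL : (∫ x in Set.Ico (0:ℝ) 1, chi p a x * (B b j' u) (Function.update k j x))
      = (p:ℂ) * ∫ x in Set.Ico (0:ℝ) 1, ∫ y in Set.Ico (0:ℝ) 1,
          chi p a x * (chi p b y * u (Function.update (Function.update k j x) j' y)) := by
    rw [← integral_const_mul]
    refine integral_congr_ae (hk3.mono fun x hx => ?_)
    dsimp only
    rw [hx, mul_left_comm, ← integral_const_mul]
  have eR : (∫ y in Set.Ico (0:ℝ) 1, chi p b y * (B a j u) (Function.update k j' y))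
      = (p:ℂ) * ∫ y in Set.Ico (0:ℝ) 1, ∫ x in Set.Ico (0:ℝ) 1,
          chi p a x * (chi p b y * u (Function.update (Function.update k j x) j' y)) := by
    rw [← integral_const_mul]
    refine integral_congr_ae (hk4.mono fun y hy => ?_)
    dsimp only
    rw [hy, mul_left_comm, ← integral_const_mul]
    congr 1
    refine integral_congr_ae (Filter.Eventually.of_forall fun x => ?_)
    dsimp only
    rw [Function.update_comm h]
    ring
  rw [eL, eR, integral_integral_swap hI]

end ops2


lemma mnp_congr {M : Type*} [Monoid M] {s t : Multiset M} (h : s = t)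
    (c : {x | x ∈ s}.Pairwise Commute) :
    s.noncommProd c = t.noncommProd (by rw [← h]; exact c) := by
  subst h; rfl

lemma sortedProd {M : Type*} [Monoid M] {n : ℕ} (s : Finset (Fin n)) (f : Fin n → M)
    (comm : (↑s : Set (Fin n)).Pairwise (Function.onFun Commute f)) :
    ((s.sort (· ≤ ·)).map f).prod = s.noncommProd f comm := by
  have h2 : s.val.map f = (((s.sort (· ≤ ·)).map f : List M) : Multiset M) := by
    rw [← Multiset.map_coe, Finset.sort_eq]
  exact ((mnp_congr h2 _).trans (Multiset.noncommProd_coe _ _)).symm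

lemma finRangeProd {M : Type*} [Monoid M] {n : ℕ} (f : Fin n → M)
    (comm : (↑(Finset.univ : Finset (Fin n)) : Set (Fin n)).Pairwise (Function.onFun Commute f)) :
    ((List.finRange n).map f).prod = Finset.univ.noncommProd f comm := by
  rw [← Fin.sort_univ n]
  exact sortedProd _ f comm

noncomputable def Fop {p N : ℕ}
    (A B : Fin p → Fin N → (Lp ℂ 2 (cubeMeasure (Fin N)) →L[ℂ] Lp ℂ 2 (cubeMeasure (Fin N))))
    (α : Finset (Fin N)) (i m : Fin N → Fin p) (j : Fin N) :
    Lp ℂ 2 (cubeMeasure (Fin N)) →L[ℂ] Lp ℂ 2 (cubeMeasure (Fin N)) :=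
  if j ∈ α then A (i j) j * B (m j) j else A (i j) j * (1 - B (i j) j)

section ops3
variable {p N : ℕ}
  {A B : Fin p → Fin N → (Lp ℂ 2 (cubeMeasure (Fin N)) →L[ℂ] Lp ℂ 2 (cubeMeasure (Fin N)))}
  (cAA' : ∀ {j j' : Fin N}, j ≠ j' → ∀ (a b : Fin p), Commute (A a j) (A b j'))
  (cAB' : ∀ {j j' : Fin N}, j ≠ j' → ∀ (a b : Fin p), Commute (A a j) (B b j'))
  (cBB' : ∀ {j j' : Fin N}, j ≠ j' → ∀ (a b : Fin p), Commute (B a j) (B b j'))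

include cAA' cAB' cBB' in
lemma commFop {j j' : Fin N} (h : j ≠ j') (α₁ α₂ : Finset (Fin N)) (i₁ m₁ i₂ m₂ : Fin N → Fin p) :
    Commute (Fop A B α₁ i₁ m₁ j) (Fop A B α₂ i₂ m₂ j') := by
  have cBA' : ∀ {j j' : Fin N}, j ≠ j' → ∀ (a b : Fin p), Commute (B a j) (A b j') :=
    fun h a b => (cAB' h.symm b a).symm
  have c1B : ∀ (a b : Fin p), Commute (A a j) (1 - B b j') :=
    fun a b => (Commute.one_right _).sub_right (cAB' h a b)
  have cB1B : ∀ (a b : Fin p), Commute (B a j) (1 - B b j') :=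
    fun a b => (Commute.one_right _).sub_right (cBB' h a b)
  have c1BA : ∀ (a b : Fin p), Commute (1 - B a j) (A b j') :=
    fun a b => (Commute.one_left _).sub_left (cBA' h a b)
  have c1B1B : ∀ (a b : Fin p), Commute (1 - B a j) (1 - B b j') :=
    fun a b => (Commute.one_right _).sub_right ((Commute.one_left _).sub_left (cBB' h a b))
  have c1BB : ∀ (a b : Fin p), Commute (1 - B a j) (B b j') :=
    fun a b => (Commute.one_left _).sub_left (cBB' h a b)
  unfold Fop
  split_ifs with h1 h2 h3
  · exact ((cAA' h _ _).mul_right (cAB' h _ _)).mul_left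
      ((cBA' h _ _).mul_right (cBB' h _ _))
  · exact ((cAA' h _ _).mul_right (c1B _ _)).mul_left
      ((cBA' h _ _).mul_right (cB1B _ _))
  · exact ((cAA' h _ _).mul_right (cAB' h _ _)).mul_left
      ((c1BA _ _).mul_right (c1BB _ _))
  · exact ((cAA' h _ _).mul_right (c1B _ _)).mul_left
      ((c1BA _ _).mul_right (c1B1B _ _))

include cAA' cAB' cBB' in
lemma Dop_eq_noncommProd (α : Finset (Fin N)) (i m : Fin N → Fin p)
    (comm : (↑(Finset.univ : Finset (Fin N)) : Set (Fin N)).Pairwise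
        (Function.onFun Commute (Fop A B α i m))) :
    Dop A B α i m = Finset.univ.noncommProd (Fop A B α i m) comm := by
  classical
  have cBA' : ∀ {j j' : Fin N}, j ≠ j' → ∀ (a b : Fin p), Commute (B a j) (A b j') :=
    fun h a b => (cAB' h.symm b a).symm
  have pwA : (↑(Finset.univ : Finset (Fin N)) : Set (Fin N)).Pairwise
      (Function.onFun Commute (fun j => A (i j) j)) :=
    fun x _ y _ hxy => cAA' hxy _ _
  have pwB : (↑α : Set (Fin N)).Pairwise (Function.onFun Commute (fun j => B (m j) j)) :=
    fun x _ y _ hxy => cBB' hxy _ _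
  have pw1 : (↑(Finset.univ \ α) : Set (Fin N)).Pairwise
      (Function.onFun Commute (fun j => 1 - B (i j) j)) :=
    fun x _ y _ hxy =>
      (Commute.one_right _).sub_right ((Commute.one_left _).sub_left (cBB' hxy _ _))
  unfold Dop Cop
  rw [finRangeProd (fun j => A (i j) j) pwA, sortedProd α (fun j => B (m j) j) pwB,
    sortedProd (Finset.univ \ α) (fun j => 1 - B (i j) j) pw1]
  -- split the A-product over α and its complement
  have hsplit : (Finset.univ : Finset (Fin N)) = α ∪ (Finset.univ \ α) :=
    (Finset.union_sdiff_of_subset α.subset_univ).symm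
  have hdisj : Disjoint α (Finset.univ \ α) := Finset.disjoint_sdiff
  have pwAu : (↑(α ∪ (Finset.univ \ α)) : Set (Fin N)).Pairwise
      (Function.onFun Commute (fun j => A (i j) j)) :=
    fun x _ y _ hxy => cAA' hxy _ _
  rw [Finset.noncommProd_congr hsplit (fun x _ => rfl) pwA,
    Finset.noncommProd_union_of_disjoint hdisj _ pwAu]
  -- commute the complement A-product past the α B-product
  have hc : ∀ (c : (↑(Finset.univ \ α) : Set (Fin N)).Pairwise
        (Function.onFun Commute (fun j => A (i j) j))),
      Commute ((Finset.univ \ α).noncommProd (fun j => A (i j) j) c)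
        (α.noncommProd (fun j => B (m j) j) pwB) := by
    intro c
    refine Finset.noncommProd_commute _ _ _ _ fun y hy => ?_
    refine (Finset.noncommProd_commute _ _ _ _ fun x hx => ?_).symm
    have hxy : x ≠ y := by
      intro e
      exact (Finset.mem_sdiff.mp hx).2 (e ▸ hy)
    exact cBA' (Ne.symm hxy) _ _
  have assoc1 : ∀ (X1 X2 Y1 Y2 : Lp ℂ 2 (cubeMeasure (Fin N)) →L[ℂ] Lp ℂ 2 (cubeMeasure (Fin N))),
      X2 * Y1 = Y1 * X2 → X1 * X2 * Y1 * Y2 = (X1 * Y1) * (X2 * Y2) := by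
    intro X1 X2 Y1 Y2 hcc
    rw [mul_assoc X1 X2 Y1, hcc, ← mul_assoc X1 Y1 X2, mul_assoc]
  rw [assoc1 _ _ _ _ (hc _).eq]
  -- merge pointwise products
  have pwABα : (↑α : Set (Fin N)).Pairwise
      (Function.onFun Commute ((fun j => A (i j) j) * (fun j => B (m j) j))) :=
    Finset.noncommProd_mul_distrib_aux (fun x _ y _ hxy => cAA' hxy _ _) pwB
      (fun x _ y _ hxy => cBA' hxy _ _)
  have pwA1c : (↑(Finset.univ \ α) : Set (Fin N)).Pairwise
      (Function.onFun Commute ((fun j => A (i j) j) * (fun j => 1 - B (i j) j))) :=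
    Finset.noncommProd_mul_distrib_aux (fun x _ y _ hxy => cAA' hxy _ _) pw1
      (fun x _ y _ hxy => (Commute.one_left _).sub_left (cBA' hxy _ _))
  rw [← Finset.noncommProd_mul_distrib _ _ _ pwB (fun x _ y _ hxy => cBA' hxy _ _),
    ← Finset.noncommProd_mul_distrib _ _ _ pw1
      (fun x _ y _ hxy => (Commute.one_left _).sub_left (cBA' hxy _ _))]
  -- rewrite both factors as noncommProds of Fop and recombine
  have e1 : α.noncommProd ((fun j => A (i j) j) * (fun j => B (m j) j)) pwABα
      = α.noncommProd (Fop A B α i m) (fun x hx y hy hxy => commFop cAA' cAB' cBB' hxy _ _ _ _ _ _) := by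
    refine Finset.noncommProd_congr rfl (fun x hx => ?_) _
    simp only [Pi.mul_apply, Fop, if_pos hx]
  have e2 : (Finset.univ \ α).noncommProd ((fun j => A (i j) j) * (fun j => 1 - B (i j) j)) pwA1c
      = (Finset.univ \ α).noncommProd (Fop A B α i m)
          (fun x hx y hy hxy => commFop cAA' cAB' cBB' hxy _ _ _ _ _ _) := by
    refine Finset.noncommProd_congr rfl (fun x hx => ?_) _
    have hx' : x ∉ α := (Finset.mem_sdiff.mp hx).2
    simp only [Pi.mul_apply, Fop, if_neg hx']
  rw [e1, e2, ← Finset.noncommProd_union_of_disjoint hdisj (Fop A B α i m)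
      (fun x _ y _ hxy => commFop cAA' cAB' cBB' hxy _ _ _ _ _ _)]
  exact Finset.noncommProd_congr hsplit.symm (fun x _ => rfl)
    (fun x _ y _ hxy => commFop cAA' cAB' cBB' hxy _ _ _ _ _ _)

end ops3

end Stmt9

/-- if the restrictions of `i` and `q` to `η ∖ α` coincide, then
`𝒟_α(i,m) · 𝒟_α(q,r) = δ(m, q_α) · 𝒟_α(i,r)`, where `δ(m, q_α) = 1` iff `m` and
`q` agree on `α`. -/
theorem stmt_9 (p N : ℕ) (hp : 0 < p) (hN : 0 < N)
    (A B : Fin p → Fin N →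
      (Lp ℂ 2 (cubeMeasure (Fin N)) →L[ℂ] Lp ℂ 2 (cubeMeasure (Fin N))))
    (hA : ∀ (i : Fin p) (j : Fin N) (u : Lp ℂ 2 (cubeMeasure (Fin N))),
      ⇑(A i j u) =ᵐ[cubeMeasure (Fin N)] fun k => chi p i (k j) * u k)
    (hB : ∀ (i : Fin p) (j : Fin N) (u : Lp ℂ 2 (cubeMeasure (Fin N))),
      ⇑(B i j u) =ᵐ[cubeMeasure (Fin N)] fun k =>
        (p : ℂ) * ∫ x in Set.Ico (0 : ℝ) 1, chi p i x * u (Function.update k j x)) :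
    ∀ (α : Finset (Fin N)) (i q : Fin N → Fin p),
      (∀ j ∉ α, i j = q j) →
      ∀ (m r : Fin N → Fin p),
        Dop A B α i m * Dop A B α q r =
          (if ∀ j ∈ α, m j = q j then (1 : ℂ) else 0) • Dop A B α i r := by
  intro α i q hiq m r
  classical
  have cAA' : ∀ {j j' : Fin N}, j ≠ j' → ∀ (a b : Fin p), Commute (A a j) (A b j') :=
    fun h a b => Stmt9.commAA hA h a b
  have cAB' : ∀ {j j' : Fin N}, j ≠ j' → ∀ (a b : Fin p), Commute (A a j) (B b j') :=
    fun h a b => Stmt9.commAB hA hB h a b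
  have cBB' : ∀ {j j' : Fin N}, j ≠ j' → ∀ (a b : Fin p), Commute (B a j) (B b j') :=
    fun h a b => Stmt9.commBB hB h a b
  have hAA := Stmt9.opAA hA
  have hBA := Stmt9.opBA hA hB
  have hBB := Stmt9.opBB hB
  have pwF : ∀ (α' : Finset (Fin N)) (i' m' : Fin N → Fin p),
      (↑(Finset.univ : Finset (Fin N)) : Set (Fin N)).Pairwise
        (Function.onFun Commute (Stmt9.Fop A B α' i' m')) :=
    fun α' i' m' x _ y _ hxy => Stmt9.commFop cAA' cAB' cBB' hxy _ _ _ _ _ _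
  have cgf : ∀ (α₁ : Finset (Fin N)) (i₁ m₁ : Fin N → Fin p) (α₂ : Finset (Fin N))
      (i₂ m₂ : Fin N → Fin p),
      (↑(Finset.univ : Finset (Fin N)) : Set (Fin N)).Pairwise
        (fun x y => Commute (Stmt9.Fop A B α₁ i₁ m₁ x) (Stmt9.Fop A B α₂ i₂ m₂ y)) :=
    fun α₁ i₁ m₁ α₂ i₂ m₂ x _ y _ hxy => Stmt9.commFop cAA' cAB' cBB' hxy _ _ _ _ _ _
  rw [Stmt9.Dop_eq_noncommProd cAA' cAB' cBB' α i m (pwF α i m),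
      Stmt9.Dop_eq_noncommProd cAA' cAB' cBB' α q r (pwF α q r),
      Stmt9.Dop_eq_noncommProd cAA' cAB' cBB' α i r (pwF α i r)]
  rw [← Finset.noncommProd_mul_distrib (Stmt9.Fop A B α i m) (Stmt9.Fop A B α q r)
      (pwF α i m) (pwF α q r) (cgf α q r α i m)]
  have mulAB : ∀ (j : Fin N) (a b c d : Fin p),
      (A a j * B b j) * (A c j * B d j) = if b = c then A a j * B d j else 0 := by
    intro j a b c d
    rw [mul_assoc, ← mul_assoc (B b j), hBA]
    rcases eq_or_ne b c with rfl | hbc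
    · rw [if_pos rfl, if_pos rfl, hBB]
    · rw [if_neg hbc, if_neg hbc, zero_mul, mul_zero]
  have mulA1 : ∀ (j : Fin N) (c : Fin p),
      (A c j * (1 - B c j)) * (A c j * (1 - B c j)) = A c j * (1 - B c j) := by
    intro j c
    have e1 : A c j * A c j = A c j := by rw [hAA]; simp
    have e2 : B c j * A c j = B c j := by rw [hBA]; simp
    have e3 : B c j * B c j = B c j := hBB c c j
    have e4 : A c j * B c j * A c j = A c j * B c j := by rw [mul_assoc, e2]
    have e5 : A c j * B c j * B c j = A c j * B c j := by rw [mul_assoc, e3]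
    simp only [mul_one_sub, sub_mul, mul_sub, mul_one, one_mul, ← mul_assoc, e1, e4, e5]
    abel
  by_cases hmq : ∀ j ∈ α, m j = q j
  · rw [if_pos hmq, one_smul]
    refine Finset.noncommProd_congr rfl (fun j _ => ?_) _
    by_cases hj : j ∈ α
    · simp only [Pi.mul_apply, Stmt9.Fop, if_pos hj]
      rw [mulAB, if_pos (hmq j hj)]
    · simp only [Pi.mul_apply, Stmt9.Fop, if_neg hj]
      rw [← hiq j hj]
      exact mulA1 j (i j)
  · rw [if_neg hmq, zero_smul]
    push_neg at hmq
    obtain ⟨j₀, hj₀, hne⟩ := hmq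
    have hzero : (Stmt9.Fop A B α i m * Stmt9.Fop A B α q r) j₀ = 0 := by
      simp only [Pi.mul_apply, Stmt9.Fop, if_pos hj₀]
      rw [mulAB, if_neg hne]
    have hins : (Finset.univ : Finset (Fin N)) = insert j₀ (Finset.univ.erase j₀) :=
      (Finset.insert_erase (Finset.mem_univ j₀)).symm
    rw [Finset.noncommProd_congr hins (fun x _ => rfl)
        (Finset.noncommProd_mul_distrib_aux (pwF α i m) (pwF α q r) (cgf α q r α i m))]
    refine (Finset.noncommProd_insert_of_notMem _ _ _ _ (Finset.notMem_erase _ _)).trans ?_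
    rw [hzero, zero_mul]
end

section
/- Let p, N be positive integers, η = {1,...,N}, and let L² be the Hilbert space of square-integrable complex functions on [0,1)^N. The family of bounded operators {𝒞_α(i, m) : α ⊆ η, i ∈ P_η, m ∈ P_α} is linearly independent over ℂ in the space of bounded operators on L²; equivalently, if Σ_{α ⊆ η} Σ_{i ∈ P_η} Σ_{m ∈ P_α} a_α(i, m)·𝒞_α(i, m) = 0 with complex coefficients a_α(i, m), then all a_α(i, m) = 0. -/
open MeasureTheory

/-- The merge of a multi-index `m ∈ P_α` with (the restriction to `η ∖ α` of) a
multi-index `i ∈ P_η`: equal to `m` on `α` and to `i` outside `α`. -/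
def mergeFn {p N : ℕ} (α : Finset (Fin N)) (m : {j // j ∈ α} → Fin p)
    (i : Fin N → Fin p) : Fin N → Fin p :=
  fun j => if h : j ∈ α then m ⟨j, h⟩ else i j

namespace Stmt11Aux
open Filter Set Function

noncomputable def mu0 : Measure ℝ := (volume : Measure ℝ).restrict (Set.Ico 0 1)

instance : IsProbabilityMeasure mu0 := by
  constructor
  rw [mu0, Measure.restrict_apply MeasurableSet.univ]
  simp [Real.volume_Ico]

lemma cube_eq (N : ℕ) : cubeMeasure (Fin N) = Measure.pi fun _ => mu0 := rfl

instance (N : ℕ) : IsProbabilityMeasure (cubeMeasure (Fin N)) := by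
  rw [cube_eq]; infer_instance

variable {p N : ℕ}

def prodFn (g : Fin N → ℝ → ℂ) : (Fin N → ℝ) → ℂ := fun k => ∏ j, g j (k j)

def Bdd (f : ℝ → ℂ) : Prop := Measurable f ∧ ∃ C, ∀ y, ‖f y‖ ≤ C

noncomputable def cval (p : ℕ) (m : Fin p) (f : ℝ → ℂ) : ℂ :=
  (p : ℂ) * ∫ x in Set.Ico (0:ℝ) 1, chi p m x * f x

noncomputable def hhalf (p : ℕ) (r : Fin p) (y : ℝ) : ℂ :=
  if (r : ℝ) / p ≤ y ∧ y < ((r : ℝ) + 1/2) / p then 1 else 0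

lemma Bdd.const (c : ℂ) : Bdd fun _ => c := ⟨measurable_const, ‖c‖, fun _ => le_rfl⟩

lemma norm_chi_le (p : ℕ) (r : Fin p) (y : ℝ) : ‖chi p r y‖ ≤ 1 := by
  unfold chi; split_ifs <;> simp

lemma bdd_chi (p : ℕ) (r : Fin p) : Bdd (chi p r) := by
  refine ⟨?_, 1, norm_chi_le p r⟩
  exact Measurable.ite (measurableSet_Ico (a := (r:ℝ)/p) (b := ((r:ℝ)+1)/p))
      measurable_const measurable_const

lemma bdd_hhalf (p : ℕ) (r : Fin p) : Bdd (hhalf p r) := by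
  refine ⟨?_, 1, fun y => ?_⟩
  · exact Measurable.ite (measurableSet_Ico (a := (r:ℝ)/p) (b := ((r:ℝ)+1/2)/p))
      measurable_const measurable_const
  · unfold hhalf; split_ifs <;> simp

lemma Bdd.chi_mul {f : ℝ → ℂ} (hf : Bdd f) (p : ℕ) (r : Fin p) :
    Bdd fun y => chi p r y * f y := by
  obtain ⟨hm, C, hC⟩ := hf
  refine ⟨(bdd_chi p r).1.mul hm, C, fun y => ?_⟩
  rw [norm_mul]
  calc ‖chi p r y‖ * ‖f y‖ ≤ 1 * C :=
        mul_le_mul (norm_chi_le p r y) (hC y) (norm_nonneg _) zero_le_one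
    _ = C := one_mul C

lemma memLp_prodFn (g : Fin N → ℝ → ℂ) (hg : ∀ j, Bdd (g j)) :
    MemLp (prodFn g) 2 (cubeMeasure (Fin N)) := by
  choose C hC using fun j => (hg j).2
  refine MemLp.of_bound ?_ (∏ j, max (C j) 0) ?_
  · exact (Finset.measurable_prod Finset.univ
      (fun j _ => ((hg j).1.comp (measurable_pi_apply j)))).aestronglyMeasurable
  · filter_upwards with k
    rw [prodFn, norm_prod]
    exact Finset.prod_le_prod (fun j _ => norm_nonneg _)
      (fun j _ => (hC j (k j)).trans (le_max_left _ _))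

lemma map_update (N : ℕ) (j : Fin N) :
    Measure.map (fun q : (Fin N → ℝ) × ℝ => Function.update q.1 j q.2)
      ((cubeMeasure (Fin N)).prod mu0) = cubeMeasure (Fin N) := by
  rw [cube_eq]
  refine (Measure.pi_eq fun s hs => ?_).symm
  rw [Measure.map_apply measurable_update' (MeasurableSet.univ_pi hs)]
  have hpre : (fun q : (Fin N → ℝ) × ℝ => Function.update q.1 j q.2) ⁻¹' (Set.univ.pi s)
      = (Set.univ.pi (Function.update s j Set.univ)) ×ˢ (s j) := by
    ext q
    simp only [Set.mem_preimage, Set.mem_pi, Set.mem_univ, forall_true_left, Set.mem_prod]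
    constructor
    · intro h
      refine ⟨fun j' => ?_, by simpa using h j⟩
      rcases eq_or_ne j' j with rfl | hne
      · simp
      · rw [Function.update_of_ne hne]
        simpa [Function.update_of_ne hne] using h j'
    · rintro ⟨h1, h2⟩ j'
      rcases eq_or_ne j' j with rfl | hne
      · simpa using h2
      · have := h1 j'
        rw [Function.update_of_ne hne] at this ⊢
        exact this
  rw [hpre, Measure.prod_prod, Measure.pi_pi]
  have : ∀ i, mu0 (Function.update s j Set.univ i) = Function.update (fun i => mu0 (s i)) j (mu0 Set.univ) i := by
    intro i
    rcases eq_or_ne i j with rfl | hne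
    · simp
    · rw [Function.update_of_ne hne, Function.update_of_ne hne]
  rw [Finset.prod_congr rfl fun i _ => this i,
    Finset.prod_update_of_mem (Finset.mem_univ j)]
  rw [Finset.prod_eq_mul_prod_sdiff_singleton_of_mem (Finset.mem_univ j) fun i => mu0 (s i)]
  simp [measure_univ, mul_comm, mul_left_comm]

lemma ae_update_slice {N : ℕ} (j : Fin N) {u v : (Fin N → ℝ) → ℂ}
    (h : u =ᵐ[cubeMeasure (Fin N)] v) :
    ∀ᵐ k ∂(cubeMeasure (Fin N)),
      (fun x => u (Function.update k j x)) =ᵐ[mu0] fun x => v (Function.update k j x) := by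
  set T := fun q : (Fin N → ℝ) × ℝ => Function.update q.1 j q.2 with hTdef
  set E := toMeasurable (cubeMeasure (Fin N)) {k | u k ≠ v k} with hE
  have hEm : MeasurableSet E := measurableSet_toMeasurable _ _
  have hE0 : cubeMeasure (Fin N) E = 0 := by
    rw [hE, measure_toMeasurable]
    exact ae_iff.mp h
  have hpre : ((cubeMeasure (Fin N)).prod mu0) (T ⁻¹' E) = 0 := by
    rw [← Measure.map_apply measurable_update' hEm, map_update N j, hE0]
  have hae : ∀ᵐ q ∂((cubeMeasure (Fin N)).prod mu0), u (T q) = v (T q) := by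
    rw [ae_iff]
    refine measure_mono_null (fun q hq => ?_) hpre
    exact subset_toMeasurable _ _ hq
  have := Measure.ae_ae_of_ae_prod hae
  filter_upwards [this] with k hk
  exact hk

section Ops
variable {p N : ℕ}
  (B : Fin p → Fin N →
    (Lp ℂ 2 (cubeMeasure (Fin N)) →L[ℂ] Lp ℂ 2 (cubeMeasure (Fin N))))
  (hB : ∀ (i : Fin p) (j : Fin N) (u : Lp ℂ 2 (cubeMeasure (Fin N))),
      ⇑(B i j u) =ᵐ[cubeMeasure (Fin N)] fun k =>
        (p : ℂ) * ∫ x in Set.Ico (0 : ℝ) 1, chi p i x * u (Function.update k j x))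

lemma prodFn_update (g : Fin N → ℝ → ℂ) (k : Fin N → ℝ) (j : Fin N) (x : ℝ) :
    prodFn g (Function.update k j x) = g j x * ∏ j' ∈ Finset.univ \ {j}, g j' (k j') := by
  have h1 : ∀ j', g j' (Function.update k j x j') =
      Function.update (fun j' => g j' (k j')) j (g j x) j' := by
    intro j'
    rcases eq_or_ne j' j with rfl | hne
    · simp
    · rw [Function.update_of_ne hne, Function.update_of_ne hne]
  rw [prodFn, Finset.prod_congr rfl fun j' _ => h1 j',
    Finset.prod_update_of_mem (Finset.mem_univ j)]

lemma prodFn_eq_update (g : Fin N → ℝ → ℂ) (f : ℝ → ℂ) (k : Fin N → ℝ) (j : Fin N) :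
    prodFn (Function.update g j f) k = f (k j) * ∏ j' ∈ Finset.univ \ {j}, g j' (k j') := by
  have h1 : ∀ j', Function.update g j f j' (k j') =
      Function.update (fun j' => g j' (k j')) j (f (k j)) j' := by
    intro j'
    rcases eq_or_ne j' j with rfl | hne
    · simp
    · rw [Function.update_of_ne hne, Function.update_of_ne hne]
  rw [prodFn, Finset.prod_congr rfl fun j' _ => h1 j',
    Finset.prod_update_of_mem (Finset.mem_univ j)]

include hB in
lemma stepB (mm : Fin p) (j : Fin N) (g : Fin N → ℝ → ℂ)
    (u : Lp ℂ 2 (cubeMeasure (Fin N)))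
    (hu : ⇑u =ᵐ[cubeMeasure (Fin N)] prodFn g) :
    ⇑(B mm j u) =ᵐ[cubeMeasure (Fin N)]
      prodFn (Function.update g j fun _ => cval p mm (g j)) := by
  filter_upwards [hB mm j u, ae_update_slice j hu] with k hk1 hk2
  rw [hk1]
  have hcongr : ∫ x in Set.Ico (0:ℝ) 1, chi p mm x * u (Function.update k j x)
      = ∫ x in Set.Ico (0:ℝ) 1, chi p mm x * prodFn g (Function.update k j x) := by
    refine integral_congr_ae ?_
    filter_upwards [hk2] with x hx
    rw [hx]
  rw [hcongr]
  have hpt : ∀ x, chi p mm x * prodFn g (Function.update k j x)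
      = (chi p mm x * g j x) * ∏ j' ∈ Finset.univ \ {j}, g j' (k j') := by
    intro x
    rw [prodFn_update, mul_assoc]
  simp_rw [hpt]
  rw [integral_mul_const, prodFn_eq_update, ← mul_assoc, cval]

end Ops

section Ops2
variable {p N : ℕ}
  (A B : Fin p → Fin N →
    (Lp ℂ 2 (cubeMeasure (Fin N)) →L[ℂ] Lp ℂ 2 (cubeMeasure (Fin N))))
  (hA : ∀ (i : Fin p) (j : Fin N) (u : Lp ℂ 2 (cubeMeasure (Fin N))),
      ⇑(A i j u) =ᵐ[cubeMeasure (Fin N)] fun k => chi p i (k j) * u k)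
  (hB : ∀ (i : Fin p) (j : Fin N) (u : Lp ℂ 2 (cubeMeasure (Fin N))),
      ⇑(B i j u) =ᵐ[cubeMeasure (Fin N)] fun k =>
        (p : ℂ) * ∫ x in Set.Ico (0 : ℝ) 1, chi p i x * u (Function.update k j x))

include hA in
lemma stepA (ii : Fin p) (j : Fin N) (g : Fin N → ℝ → ℂ)
    (u : Lp ℂ 2 (cubeMeasure (Fin N)))
    (hu : ⇑u =ᵐ[cubeMeasure (Fin N)] prodFn g) :
    ⇑(A ii j u) =ᵐ[cubeMeasure (Fin N)]
      prodFn (Function.update g j fun y => chi p ii y * g j y) := by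
  filter_upwards [hA ii j u, hu] with k hk1 hk2
  rw [hk1, hk2, prodFn_eq_update, prodFn,
    Finset.prod_eq_mul_prod_sdiff_singleton_of_mem (Finset.mem_univ j) (fun j' => g j' (k j')),
    ← mul_assoc]

include hB in
lemma prodB (m : Fin N → Fin p) (l : List (Fin N)) (hl : l.Nodup) :
    ∀ (g : Fin N → ℝ → ℂ) (u : Lp ℂ 2 (cubeMeasure (Fin N))),
      ⇑u =ᵐ[cubeMeasure (Fin N)] prodFn g →
      ⇑(((l.map fun j => B (m j) j).prod) u) =ᵐ[cubeMeasure (Fin N)]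
        prodFn (fun j => if j ∈ l then (fun _ => cval p (m j) (g j)) else g j) := by
  induction l with
  | nil =>
    intro g u hu
    simpa [List.not_mem_nil] using hu
  | cons j l ih =>
    intro g u hu
    obtain ⟨hj, hl'⟩ := List.nodup_cons.mp hl
    rw [List.map_cons, List.prod_cons, ContinuousLinearMap.mul_apply]
    have h2 := stepB B hB (m j) j _ _ (ih hl' g u hu)
    refine h2.trans (Filter.EventuallyEq.of_eq (congrArg prodFn ?_))
    funext j'
    rcases eq_or_ne j' j with rfl | hne
    · rw [Function.update_self, if_pos (List.mem_cons_self (a := j') (l := l)), if_neg hj]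
    · rw [Function.update_of_ne hne]
      simp only [List.mem_cons]
      rcases Decidable.em (j' ∈ l) with hmem | hmem
      · rw [if_pos hmem, if_pos (Or.inr hmem)]
      · rw [if_neg hmem, if_neg (by tauto)]

include hA in
lemma prodA (i : Fin N → Fin p) (l : List (Fin N)) (hl : l.Nodup) :
    ∀ (g : Fin N → ℝ → ℂ) (u : Lp ℂ 2 (cubeMeasure (Fin N))),
      ⇑u =ᵐ[cubeMeasure (Fin N)] prodFn g →
      ⇑(((l.map fun j => A (i j) j).prod) u) =ᵐ[cubeMeasure (Fin N)]
        prodFn (fun j => if j ∈ l then (fun y => chi p (i j) y * g j y) else g j) := by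
  induction l with
  | nil =>
    intro g u hu
    simpa [List.not_mem_nil] using hu
  | cons j l ih =>
    intro g u hu
    obtain ⟨hj, hl'⟩ := List.nodup_cons.mp hl
    rw [List.map_cons, List.prod_cons, ContinuousLinearMap.mul_apply]
    have h2 := stepA A hA (i j) j _ _ (ih hl' g u hu)
    refine h2.trans (Filter.EventuallyEq.of_eq (congrArg prodFn ?_))
    funext j'
    rcases eq_or_ne j' j with rfl | hne
    · rw [Function.update_self, if_pos (List.mem_cons_self (a := j') (l := l)), if_neg hj]
    · rw [Function.update_of_ne hne]
      simp only [List.mem_cons]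
      rcases Decidable.em (j' ∈ l) with hmem | hmem
      · rw [if_pos hmem, if_pos (Or.inr hmem)]
      · rw [if_neg hmem, if_neg (by tauto)]

include hA hB in
lemma coe_Cop (α : Finset (Fin N)) (i m : Fin N → Fin p)
    (g : Fin N → ℝ → ℂ) (u : Lp ℂ 2 (cubeMeasure (Fin N)))
    (hu : ⇑u =ᵐ[cubeMeasure (Fin N)] prodFn g) :
    ⇑(Cop A B α i m u) =ᵐ[cubeMeasure (Fin N)]
      prodFn (fun j => fun y => chi p (i j) y *
        (if j ∈ α then cval p (m j) (g j) else g j y)) := by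
  rw [Cop, ContinuousLinearMap.mul_apply]
  have h1 := prodB B hB m (α.sort (· ≤ ·)) (Finset.sort_nodup _ _) g u hu
  have h2 := prodA A hA i (List.finRange N) (List.nodup_finRange N) _ _ h1
  refine h2.trans (Filter.EventuallyEq.of_eq (congrArg prodFn ?_))
  funext j y
  rw [if_pos (List.mem_finRange j)]
  rcases Decidable.em (j ∈ α) with hmem | hmem
  · rw [if_pos ((Finset.mem_sort _).mpr hmem), if_pos hmem]
  · rw [if_neg (fun hc => hmem ((Finset.mem_sort _).mp hc)), if_neg hmem]

end Ops2

section Eval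
variable {p N : ℕ}

/-- The half-cube `I_j` determined by `s` and `γ`. -/
noncomputable def II (p : ℕ) {N : ℕ} (s : Fin N → Fin p) (γ : Finset (Fin N)) (j : Fin N) :
    Set ℝ :=
  Set.Ico (((s j : ℝ) + if j ∈ γ then (1/2 : ℝ) else 0) / p)
    (((s j : ℝ) + if j ∈ γ then (1 : ℝ) else 1/2) / p)

lemma fin_eq_of_overlap (hp : 0 < p) {r c : Fin p} {y : ℝ}
    (h1 : (r : ℝ) / p ≤ y) (h2 : y < ((c : ℝ) + 1) / p)
    (h3 : (c : ℝ) / p ≤ y) (h4 : y < ((r : ℝ) + 1) / p) : r = c := by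
  have hp' : (0 : ℝ) < p := Nat.cast_pos.mpr hp
  have e1 : (r : ℝ) < (c : ℝ) + 1 := by
    have := h1.trans_lt h2
    rwa [div_lt_div_iff_of_pos_right hp'] at this
  have e2 : (c : ℝ) < (r : ℝ) + 1 := by
    have := h3.trans_lt h4
    rwa [div_lt_div_iff_of_pos_right hp'] at this
  have n1 : (r : ℕ) < (c : ℕ) + 1 := by exact_mod_cast e1
  have n2 : (c : ℕ) < (r : ℕ) + 1 := by exact_mod_cast e2
  exact Fin.ext (by omega)

lemma II_lo (hp : 0 < p) {s : Fin N → Fin p} {γ : Finset (Fin N)} {j : Fin N} {y : ℝ}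
    (hy : y ∈ II p s γ j) : (s j : ℝ) / p ≤ y := by
  have hp' : (0 : ℝ) < p := Nat.cast_pos.mpr hp
  refine le_trans ?_ hy.1
  rw [div_le_div_iff_of_pos_right hp']
  have : (0:ℝ) ≤ if j ∈ γ then (1/2 : ℝ) else 0 := by split_ifs <;> norm_num
  linarith

lemma II_hi (hp : 0 < p) {s : Fin N → Fin p} {γ : Finset (Fin N)} {j : Fin N} {y : ℝ}
    (hy : y ∈ II p s γ j) : y < ((s j : ℝ) + 1) / p := by
  have hp' : (0 : ℝ) < p := Nat.cast_pos.mpr hp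
  refine lt_of_lt_of_le hy.2 ?_
  rw [div_le_div_iff_of_pos_right hp']
  have : (if j ∈ γ then (1:ℝ) else 1/2) ≤ 1 := by split_ifs <;> norm_num
  linarith

lemma chi_eval (hp : 0 < p) {s : Fin N → Fin p} {γ : Finset (Fin N)} {j : Fin N} {y : ℝ}
    (hy : y ∈ II p s γ j) (r : Fin p) :
    chi p r y = if r = s j then 1 else 0 := by
  rcases eq_or_ne r (s j) with rfl | hr
  · rw [if_pos rfl, chi, if_pos ⟨II_lo hp hy, II_hi hp hy⟩]
  · rw [if_neg hr, chi, if_neg]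
    rintro ⟨h1, h2⟩
    exact hr (fin_eq_of_overlap hp h1 (II_hi hp hy) (II_lo hp hy) h2)

lemma hhalf_eval (hp : 0 < p) {s : Fin N → Fin p} {γ : Finset (Fin N)} {j : Fin N} {y : ℝ}
    (hy : y ∈ II p s γ j) (t : Fin p) :
    hhalf p t y = if j ∉ γ ∧ t = s j then 1 else 0 := by
  have hp' : (0 : ℝ) < p := Nat.cast_pos.mpr hp
  by_cases hγ : j ∈ γ
  · rw [if_neg (by tauto), hhalf, if_neg]
    rintro ⟨h1, h2⟩
    -- y ≥ (s j + 1/2)/p, y < (t + 1/2)/p gives s j < t; t/p ≤ y < (s j+1)/p gives t ≤ s j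
    have hlo : ((s j : ℝ) + 1/2) / p ≤ y := by
      have := hy.1; rwa [if_pos hγ] at this
    have e1 : (t : ℝ) < (s j : ℝ) + 1 := by
      have := h1.trans_lt (II_hi hp hy)
      rwa [div_lt_div_iff_of_pos_right hp'] at this
    have e2 : (s j : ℝ) + 1/2 < (t : ℝ) + 1/2 := by
      have := hlo.trans_lt h2
      rwa [div_lt_div_iff_of_pos_right hp'] at this
    have n1 : (t : ℕ) < (s j : ℕ) + 1 := by exact_mod_cast e1
    have n2 : (s j : ℕ) < (t : ℕ) := by
      have : (s j : ℝ) < (t : ℝ) := by linarith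
      exact_mod_cast this
    omega
  · have hlo : (s j : ℝ) / p ≤ y := by
      have := hy.1; rwa [if_neg hγ, add_zero] at this
    have hhi : y < ((s j : ℝ) + 1/2) / p := by
      have := hy.2; rwa [if_neg hγ] at this
    rcases eq_or_ne t (s j) with rfl | ht
    · rw [if_pos ⟨hγ, rfl⟩, hhalf, if_pos ⟨hlo, hhi⟩]
    · rw [if_neg (by tauto), hhalf, if_neg]
      rintro ⟨h1, h2⟩
      have e1 : (t : ℝ) < (s j : ℝ) + 1 := by
        have := h1.trans_lt (II_hi hp hy)
        rwa [div_lt_div_iff_of_pos_right hp'] at this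
      have e2 : (s j : ℝ) < (t : ℝ) + 1/2 := by
        have := hlo.trans_lt h2
        rwa [div_lt_div_iff_of_pos_right hp'] at this
      have n1 : (t : ℕ) < (s j : ℕ) + 1 := by exact_mod_cast e1
      have n2 : (s j : ℕ) < (t : ℕ) + 1 := by
        have : (s j : ℝ) < (t : ℝ) + 1 := by linarith
        exact_mod_cast this
      exact ht (Fin.ext (by omega))

lemma cval_hhalf (hp : 0 < p) (m t : Fin p) :
    cval p m (hhalf p t) = if m = t then (2⁻¹ : ℂ) else 0 := by
  have hp' : (0 : ℝ) < p := Nat.cast_pos.mpr hp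
  have hpt : ∀ x : ℝ, chi p m x * hhalf p t x = if m = t then hhalf p t x else 0 := by
    intro x
    rcases eq_or_ne m t with rfl | hmt
    · rw [if_pos rfl]
      by_cases hx : (m : ℝ) / p ≤ x ∧ x < ((m : ℝ) + 1/2) / p
      · have h1 : hhalf p m x = 1 := by rw [hhalf, if_pos hx]
        have h2 : chi p m x = 1 := by
          rw [chi, if_pos]
          exact ⟨hx.1, hx.2.trans_le (by rw [div_le_div_iff_of_pos_right hp']; norm_num)⟩
        rw [h1, h2, one_mul]
      · have h1 : hhalf p m x = 0 := by rw [hhalf, if_neg hx]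
        rw [h1, mul_zero]
    · rw [if_neg hmt]
      by_cases h2 : (t : ℝ) / p ≤ x ∧ x < ((t : ℝ) + 1/2) / p
      · have hchi : chi p m x = 0 := by
          rw [chi, if_neg]
          rintro ⟨g1, g2⟩
          have h2' : x < ((t : ℝ) + 1) / p :=
            h2.2.trans_le (by rw [div_le_div_iff_of_pos_right hp']; norm_num)
          exact hmt (fin_eq_of_overlap hp g1 h2' h2.1 g2)
        rw [hchi, zero_mul]
      · have h1 : hhalf p t x = 0 := by rw [hhalf, if_neg h2]
        rw [h1, mul_zero]
  rw [cval]
  simp_rw [hpt]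
  rcases eq_or_ne m t with rfl | hmt
  · simp only [if_pos rfl]
    have hind : ∀ x : ℝ, hhalf p m x =
        Set.indicator (Set.Ico ((m:ℝ)/p) (((m:ℝ)+1/2)/p)) (fun _ => (1:ℂ)) x := by
      intro x
      rw [Set.indicator_apply, hhalf]
      by_cases hx : x ∈ Set.Ico ((m:ℝ)/p) (((m:ℝ)+1/2)/p)
      · rw [if_pos hx, if_pos (Set.mem_Ico.mp hx)]
      · rw [if_neg hx, if_neg (fun hc => hx (Set.mem_Ico.mpr hc))]
    simp_rw [hind]
    simp only [if_true]
    rw [integral_indicator_const (1:ℂ) measurableSet_Ico]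
    have hple : (m : ℝ) + 1 ≤ p := by exact_mod_cast Nat.succ_le_of_lt m.isLt
    have hsub : Set.Ico ((m:ℝ)/p) (((m:ℝ)+1/2)/p) ⊆ Set.Ico (0:ℝ) 1 := by
      refine Set.Ico_subset_Ico (by positivity) ?_
      rw [div_le_one hp']
      linarith
    rw [measureReal_restrict_apply measurableSet_Ico, Set.inter_eq_left.mpr hsub, Real.volume_real_Ico]
    have harith : ((m:ℝ)+1/2)/p - (m:ℝ)/p = 1/(2*p) := by
      field_simp
      ring
    rw [harith, max_eq_left (by positivity), Complex.real_smul, mul_one]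
    have hp0 : (p : ℂ) ≠ 0 := Nat.cast_ne_zero.mpr hp.ne'
    push_cast
    field_simp
  · simp only [if_neg hmt, integral_zero, mul_zero]

end Eval

section Sums
variable {δ : Type*} {m0 : MeasurableSpace δ} {μ : Measure δ}

lemma coeFn_finset_sum {β : Type*} (sfin : Finset β) (v : β → Lp ℂ 2 μ) :
    ⇑(∑ b ∈ sfin, v b) =ᵐ[μ] fun k => ∑ b ∈ sfin, v b k := by
  classical
  induction sfin using Finset.induction_on with
  | empty =>
    rw [Finset.sum_empty]
    filter_upwards [Lp.coeFn_zero (E := ℂ) (p := (2:ENNReal)) (μ := μ)] with k hk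
    rw [hk]
    simp
  | @insert b sf hb ih =>
    rw [Finset.sum_insert hb]
    filter_upwards [Lp.coeFn_add (v b) (∑ c ∈ sf, v c), ih] with k h1 h2
    rw [h1]
    simp only [Pi.add_apply, h2]
    rw [Finset.sum_insert hb]

lemma ae_sum_congr {β : Type*} (sfin : Finset β) {v f : β → δ → ℂ}
    (h : ∀ b ∈ sfin, v b =ᵐ[μ] f b) :
    (fun k => ∑ b ∈ sfin, v b k) =ᵐ[μ] fun k => ∑ b ∈ sfin, f b k := by
  classical
  induction sfin using Finset.induction_on with
  | empty => simp
  | @insert b s hb ih =>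
    filter_upwards [h _ (Finset.mem_insert_self _ _),
      ih fun c hcm => h c (Finset.mem_insert_of_mem hcm)] with k h1 h2
    rw [Finset.sum_insert hb, Finset.sum_insert hb, h1, h2]

end Sums

section Key
variable {p N : ℕ}

noncomputable def Eval (p N : ℕ) (s : Fin N → Fin p) (γ : Finset (Fin N)) (t : Fin N → Fin p)
    (α : Finset (Fin N)) (i : Fin N → Fin p) (m : {j // j ∈ α} → Fin p) : ℂ :=
  ∏ j : Fin N, ((if i j = s j then (1:ℂ) else 0) *
    (if j ∈ α then (if mergeFn α m i j = t j then (2⁻¹:ℂ) else 0)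
     else (if j ∉ γ ∧ t j = s j then (1:ℂ) else 0)))

lemma key_eq (hp : 0 < p)
    (A B : Fin p → Fin N →
      (Lp ℂ 2 (cubeMeasure (Fin N)) →L[ℂ] Lp ℂ 2 (cubeMeasure (Fin N))))
    (hA : ∀ (i : Fin p) (j : Fin N) (u : Lp ℂ 2 (cubeMeasure (Fin N))),
      ⇑(A i j u) =ᵐ[cubeMeasure (Fin N)] fun k => chi p i (k j) * u k)
    (hB : ∀ (i : Fin p) (j : Fin N) (u : Lp ℂ 2 (cubeMeasure (Fin N))),
      ⇑(B i j u) =ᵐ[cubeMeasure (Fin N)] fun k =>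
        (p : ℂ) * ∫ x in Set.Ico (0 : ℝ) 1, chi p i x * u (Function.update k j x))
    (a : ∀ α : Finset (Fin N), (Fin N → Fin p) → ({j // j ∈ α} → Fin p) → ℂ)
    (h : ∑ α ∈ (Finset.univ : Finset (Fin N)).powerset,
      ∑ i : Fin N → Fin p, ∑ m : {j // j ∈ α} → Fin p,
        a α i m • Cop A B α i (mergeFn α m i) = 0)
    (s t : Fin N → Fin p) (γ : Finset (Fin N)) :
    ∑ α ∈ (Finset.univ : Finset (Fin N)).powerset,
      ∑ i : Fin N → Fin p, ∑ m : {j // j ∈ α} → Fin p,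
        a α i m * Eval p N s γ t α i m = 0 := by
  classical
  have hg0b : ∀ j, Bdd ((fun j => hhalf p (t j)) j) := fun j => bdd_hhalf p (t j)
  set uT : Lp ℂ 2 (cubeMeasure (Fin N)) := (memLp_prodFn _ hg0b).toLp _ with huT
  have hu : ⇑uT =ᵐ[cubeMeasure (Fin N)] prodFn (fun j => hhalf p (t j)) :=
    MemLp.coeFn_toLp _
  have hCop : ∀ (α : Finset (Fin N)) (i : Fin N → Fin p) (m : {j // j ∈ α} → Fin p),
      ⇑(Cop A B α i (mergeFn α m i) uT) =ᵐ[cubeMeasure (Fin N)]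
        prodFn (fun j => fun y => chi p (i j) y *
          (if j ∈ α then cval p (mergeFn α m i j) (hhalf p (t j)) else hhalf p (t j) y)) :=
    fun α i m => coe_Cop A B hA hB α i (mergeFn α m i) _ uT hu
  have happ : (∑ α ∈ (Finset.univ : Finset (Fin N)).powerset, ∑ i : Fin N → Fin p,
      ∑ m : {j // j ∈ α} → Fin p, a α i m • (Cop A B α i (mergeFn α m i) uT)) = 0 := by
    have := congrArg
      (fun T : Lp ℂ 2 (cubeMeasure (Fin N)) →L[ℂ] Lp ℂ 2 (cubeMeasure (Fin N)) => T uT) h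
    simpa only [ContinuousLinearMap.sum_apply, ContinuousLinearMap.smul_apply,
      ContinuousLinearMap.zero_apply] using this
  set F : (Fin N → ℝ) → ℂ := fun k =>
    ∑ α ∈ (Finset.univ : Finset (Fin N)).powerset, ∑ i : Fin N → Fin p,
      ∑ m : {j // j ∈ α} → Fin p, a α i m *
        prodFn (fun j => fun y => chi p (i j) y *
          (if j ∈ α then cval p (mergeFn α m i j) (hhalf p (t j)) else hhalf p (t j) y)) k
    with hFdef
  have hcoe : ⇑(∑ α ∈ (Finset.univ : Finset (Fin N)).powerset, ∑ i : Fin N → Fin p,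
      ∑ m : {j // j ∈ α} → Fin p, a α i m • (Cop A B α i (mergeFn α m i) uT))
      =ᵐ[cubeMeasure (Fin N)] F := by
    refine (coeFn_finset_sum _ _).trans ?_
    refine ae_sum_congr _ (fun α _ => ?_)
    refine (coeFn_finset_sum _ _).trans ?_
    refine ae_sum_congr _ (fun i _ => ?_)
    refine (coeFn_finset_sum _ _).trans ?_
    refine ae_sum_congr _ (fun m _ => ?_)
    refine (Lp.coeFn_smul _ _).trans ?_
    filter_upwards [hCop α i m] with k hk
    simp only [Pi.smul_apply, hk, smul_eq_mul]
  have hF0 : F =ᵐ[cubeMeasure (Fin N)] (fun _ => (0:ℂ)) := by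
    rw [happ] at hcoe
    refine hcoe.symm.trans ?_
    filter_upwards [Lp.coeFn_zero ℂ 2 (cubeMeasure (Fin N))] with k hk
    exact hk
  have hS0 : cubeMeasure (Fin N) (Set.univ.pi (II p s γ)) ≠ 0 := by
    rw [cube_eq, Measure.pi_pi]
    refine Finset.prod_ne_zero_iff.mpr (fun j _ => ?_)
    have hp' : (0:ℝ) < p := Nat.cast_pos.mpr hp
    have hple : (s j : ℝ) + 1 ≤ p := by exact_mod_cast Nat.succ_le_of_lt (s j).isLt
    have he0 : (0:ℝ) ≤ (if j ∈ γ then (1/2:ℝ) else 0) := by split_ifs <;> norm_num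
    have he1 : (if j ∈ γ then (1:ℝ) else 1/2) ≤ 1 := by split_ifs <;> norm_num
    have hgap : (if j ∈ γ then (1/2:ℝ) else 0) + 1/2 = (if j ∈ γ then (1:ℝ) else 1/2) := by
      split_ifs <;> norm_num
    have hsub : II p s γ j ⊆ Set.Ico (0:ℝ) 1 := by
      rw [II]
      refine Set.Ico_subset_Ico (by positivity) ?_
      rw [div_le_one hp']
      linarith
    rw [II, mu0, Measure.restrict_apply measurableSet_Ico,
      Set.inter_eq_left.mpr (by rw [II] at hsub; exact hsub), Real.volume_Ico]
    have hdiff : ((s j : ℝ) + (if j ∈ γ then (1:ℝ) else 1/2))/p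
        - ((s j : ℝ) + (if j ∈ γ then (1/2:ℝ) else 0))/p = 1/(2*p) := by
      rw [div_sub_div_same]
      have : ((s j : ℝ) + (if j ∈ γ then (1:ℝ) else 1/2))
          - ((s j : ℝ) + (if j ∈ γ then (1/2:ℝ) else 0)) = 1/2 := by
        split_ifs <;> ring
      rw [this, div_div]
    rw [hdiff, Ne, ENNReal.ofReal_eq_zero, not_le]
    positivity
  obtain ⟨k0, hk0, hFk0⟩ : ∃ k ∈ Set.univ.pi (II p s γ), F k = 0 := by
    by_contra hcon
    push_neg at hcon
    refine hS0 (measure_mono_null (fun k hk => ?_) (ae_iff.mp hF0))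
    exact hcon k hk
  rw [← hFk0, hFdef]
  refine Finset.sum_congr rfl fun α _ => Finset.sum_congr rfl fun i _ =>
    Finset.sum_congr rfl fun m _ => ?_
  congr 1
  rw [Eval, prodFn]
  refine Finset.prod_congr rfl fun j _ => ?_
  have hkj : k0 j ∈ II p s γ j := hk0 j (Set.mem_univ j)
  rw [chi_eval hp hkj (i j), cval_hhalf hp, hhalf_eval hp hkj (t j)]

end Key

section Endgame
variable {p N : ℕ}

lemma coeff_zero
    (a : ∀ α : Finset (Fin N), (Fin N → Fin p) → ({j // j ∈ α} → Fin p) → ℂ)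
    (hkey : ∀ (s t : Fin N → Fin p) (γ : Finset (Fin N)),
      ∑ α ∈ (Finset.univ : Finset (Fin N)).powerset,
        ∑ i : Fin N → Fin p, ∑ m : {j // j ∈ α} → Fin p,
          a α i m * Eval p N s γ t α i m = 0)
    (α₀ : Finset (Fin N)) (i₀ : Fin N → Fin p) (m₀ : {j // j ∈ α₀} → Fin p)
    (IH : ∀ α : Finset (Fin N), α₀ ⊂ α → ∀ m : {j // j ∈ α} → Fin p, a α i₀ m = 0) :
    a α₀ i₀ m₀ = 0 := by
  classical
  have hkey0 := hkey i₀ (mergeFn α₀ m₀ i₀) α₀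
  set t : Fin N → Fin p := mergeFn α₀ m₀ i₀ with hT
  have hdouble : ∀ α : Finset (Fin N),
      (∑ i : Fin N → Fin p, ∑ m : {j // j ∈ α} → Fin p, a α i m * Eval p N i₀ α₀ t α i m)
      = if α₀ ⊆ α then (2⁻¹:ℂ)^α.card * a α i₀ (fun j => t j.val) else 0 := by
    intro α
    have hne : ∀ i ∈ (Finset.univ : Finset (Fin N → Fin p)), i ≠ i₀ →
        (∑ m : {j // j ∈ α} → Fin p, a α i m * Eval p N i₀ α₀ t α i m) = 0 := by
      intro i _ hi
      refine Finset.sum_eq_zero fun m _ => ?_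
      obtain ⟨j, hj⟩ : ∃ j, i j ≠ i₀ j := by
        by_contra hcon; push_neg at hcon; exact hi (funext hcon)
      have hz : Eval p N i₀ α₀ t α i m = 0 := by
        rw [Eval]
        refine Finset.prod_eq_zero (Finset.mem_univ j) ?_
        rw [if_neg hj, zero_mul]
      rw [hz, mul_zero]
    rw [Finset.sum_eq_single i₀ hne (fun hni => absurd (Finset.mem_univ i₀) hni)]
    by_cases hsub : α₀ ⊆ α
    · rw [if_pos hsub]
      have heval : ∀ m : {j // j ∈ α} → Fin p,
          Eval p N i₀ α₀ t α i₀ m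
          = ∏ j ∈ α, (if mergeFn α m i₀ j = t j then (2⁻¹:ℂ) else 0) := by
        intro m
        rw [Eval]
        have h1 : ∀ j : Fin N, ((if i₀ j = i₀ j then (1:ℂ) else 0) *
            (if j ∈ α then (if mergeFn α m i₀ j = t j then (2⁻¹:ℂ) else 0)
             else (if j ∉ α₀ ∧ t j = i₀ j then (1:ℂ) else 0)))
            = (if j ∈ α then (if mergeFn α m i₀ j = t j then (2⁻¹:ℂ) else 0) else
               (if j ∉ α₀ ∧ t j = i₀ j then (1:ℂ) else 0)) := by
          intro j; rw [if_pos rfl, one_mul]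
        rw [Finset.prod_congr rfl fun j _ => h1 j]
        have hout : ∀ j ∈ (Finset.univ : Finset (Fin N)), j ∉ α →
            (if j ∈ α then (if mergeFn α m i₀ j = t j then (2⁻¹:ℂ) else 0) else
               (if j ∉ α₀ ∧ t j = i₀ j then (1:ℂ) else 0)) = 1 := by
          intro j _ hj
          have hjα₀ : j ∉ α₀ := fun hc => hj (hsub hc)
          have htj : t j = i₀ j := by
            rw [hT]; simp only [mergeFn]; rw [dif_neg hjα₀]
          rw [if_neg hj, if_pos ⟨hjα₀, htj⟩]
        rw [← Finset.prod_subset (Finset.subset_univ α) hout]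
        exact Finset.prod_congr rfl fun j hj => by rw [if_pos hj]
      rw [Finset.sum_congr rfl fun m _ => by rw [heval m]]
      rw [Finset.sum_eq_single (fun j : {j // j ∈ α} => t j.val) ?_ ?_]
      · have hval : ∀ j ∈ α,
            (if mergeFn α (fun j : {j // j ∈ α} => t j.val) i₀ j = t j then (2⁻¹:ℂ) else 0)
            = 2⁻¹ := by
          intro j hj
          simp only [mergeFn]
          rw [dif_pos hj]
          simp
        rw [Finset.prod_congr rfl hval, Finset.prod_const, mul_comm]
      · intro m _ hm
        obtain ⟨j0, hj0⟩ : ∃ j0 : {j // j ∈ α}, m j0 ≠ t j0.val := by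
          by_contra hcon; push_neg at hcon; exact hm (funext hcon)
        have hz : (∏ j ∈ α, (if mergeFn α m i₀ j = t j then (2⁻¹:ℂ) else 0)) = 0 := by
          refine Finset.prod_eq_zero j0.prop ?_
          have hmerge : mergeFn α m i₀ (j0 : Fin N) = m j0 := by
            simp [mergeFn, j0.prop]
          rw [hmerge, if_neg hj0]
        rw [hz, mul_zero]
      · intro hni; exact absurd (Finset.mem_univ _) hni
    · rw [if_neg hsub]
      obtain ⟨j, hjα₀, hjα⟩ := Finset.not_subset.mp hsub
      refine Finset.sum_eq_zero fun m _ => ?_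
      have hz : Eval p N i₀ α₀ t α i₀ m = 0 := by
        rw [Eval]
        refine Finset.prod_eq_zero (Finset.mem_univ j) ?_
        rw [if_neg hjα,
          if_neg (show ¬(j ∉ α₀ ∧ t j = i₀ j) from fun hc => hc.1 hjα₀), mul_zero]
      rw [hz, mul_zero]
  rw [Finset.sum_congr rfl (fun α _ => hdouble α)] at hkey0
  have hz1 : ∀ b ∈ (Finset.univ : Finset (Fin N)).powerset, b ≠ α₀ →
      (if α₀ ⊆ b then (2⁻¹:ℂ)^b.card * a b i₀ (fun j => t j.val) else 0) = 0 := by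
    intro α _ hne
    by_cases hsub : α₀ ⊆ α
    · rw [if_pos hsub, IH α (Finset.ssubset_iff_subset_ne.mpr ⟨hsub, Ne.symm hne⟩) _, mul_zero]
    · rw [if_neg hsub]
  rw [Finset.sum_eq_single α₀ hz1
    (fun hni => absurd (Finset.mem_powerset.mpr (Finset.subset_univ α₀)) hni)] at hkey0
  rw [if_pos (Finset.Subset.refl α₀)] at hkey0
  have hm : (fun j : {j // j ∈ α₀} => t j.val) = m₀ := by
    funext j
    simp [hT, mergeFn, j.prop]
  rw [hm] at hkey0
  have h2 : (2⁻¹:ℂ)^α₀.card ≠ 0 := pow_ne_zero _ (by norm_num)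
  exact (mul_eq_zero.mp hkey0).resolve_left h2

end Endgame
end Stmt11Aux

/-- the family `{𝒞_α(i,m) : α ⊆ η, i ∈ P_η, m ∈ P_α}` is linearly
independent: if `Σ_{α,i,m} a_α(i,m) 𝒞_α(i,m) = 0` then all `a_α(i,m) = 0`.
(Since `𝒞_α(i,m)` only uses the values of its third argument on `α`, the
multi-index `m ∈ P_α` is encoded as a function on `α`, merged with `i` outside
`α` to form a full function.) -/
theorem stmt_11 (p N : ℕ) (hp : 0 < p) (hN : 0 < N)
    (A B : Fin p → Fin N →
      (Lp ℂ 2 (cubeMeasure (Fin N)) →L[ℂ] Lp ℂ 2 (cubeMeasure (Fin N))))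
    (hA : ∀ (i : Fin p) (j : Fin N) (u : Lp ℂ 2 (cubeMeasure (Fin N))),
      ⇑(A i j u) =ᵐ[cubeMeasure (Fin N)] fun k => chi p i (k j) * u k)
    (hB : ∀ (i : Fin p) (j : Fin N) (u : Lp ℂ 2 (cubeMeasure (Fin N))),
      ⇑(B i j u) =ᵐ[cubeMeasure (Fin N)] fun k =>
        (p : ℂ) * ∫ x in Set.Ico (0 : ℝ) 1, chi p i x * u (Function.update k j x))
    (a : ∀ α : Finset (Fin N), (Fin N → Fin p) → ({j // j ∈ α} → Fin p) → ℂ)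
    (h : ∑ α ∈ (Finset.univ : Finset (Fin N)).powerset,
      ∑ i : Fin N → Fin p, ∑ m : {j // j ∈ α} → Fin p,
        a α i m • Cop A B α i (mergeFn α m i) = 0) :
    ∀ (α : Finset (Fin N)) (i : Fin N → Fin p) (m : {j // j ∈ α} → Fin p),
      a α i m = 0 := by
  intro α i m
  have hkey := Stmt11Aux.key_eq hp A B hA hB a h
  suffices H : ∀ (n : ℕ) (α₀ : Finset (Fin N)),
      (Finset.univ : Finset (Fin N)).card - α₀.card ≤ n →
      ∀ (i₀ : Fin N → Fin p) (m₀ : {j // j ∈ α₀} → Fin p), a α₀ i₀ m₀ = 0 by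
    exact H _ α le_rfl i m
  intro n
  induction n with
  | zero =>
    intro α₀ hc i₀ m₀
    have hα₀ : α₀ = Finset.univ :=
      Finset.eq_of_subset_of_card_le (Finset.subset_univ α₀) (by omega)
    refine Stmt11Aux.coeff_zero a hkey α₀ i₀ m₀ ?_
    intro α' hss m'
    exfalso
    subst hα₀
    exact hss.ne ((Finset.subset_univ α').antisymm hss.subset).symm
  | succ n ih =>
    intro α₀ hc i₀ m₀
    refine Stmt11Aux.coeff_zero a hkey α₀ i₀ m₀ ?_
    intro α' hss m'
    refine ih α' ?_ i₀ m'
    have h1 := Finset.card_lt_card hss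
    have h2 := Finset.card_le_card (Finset.subset_univ α')
    omega
end

section
/- Let N be a positive integer and let L² be the Hilbert space of square-integrable complex functions on [0,1)^N with Lebesgue measure. Given complex numbers a_α for each α ⊆ {1,...,N}, define the bounded operator (𝒜u)(k) = Σ_{α ⊆ {1,...,N}} a_α ∫_{[0,1)^{|α|}} u(k with coordinates in α replaced by x_α) dx_α. Set b_α = Σ_{β ⊆ α} a_β. If b_α ≠ 0 for all α ⊆ {1,...,N}, then 𝒜 is invertible in the algebra of bounded operators on L², and its inverse is (𝒜^{-1}u)(k) = Σ_{α ⊆ {1,...,N}} c_α ∫_{[0,1)^{|α|}} u(k with coordinates in α replaced by x_α) dx_α, where c_α = Σ_{β ⊆ α} (−1)^{|α∖β|} b_β^{-1}. -/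
open MeasureTheory

/-- `∫_{[0,1)^{|α|}} u(k with the coordinates in α replaced by x_α) dx_α`:
integration of `u` over the coordinates indexed by `α`, the remaining
coordinates being those of `k`.  For `α = ∅` this is `u k`. -/
noncomputable def partialIntegral {N : ℕ} (α : Finset (Fin N))
    (u : (Fin N → ℝ) → ℂ) (k : Fin N → ℝ) : ℂ :=
  ∫ x : {j // j ∈ α} → ℝ, u (fun j => if h : j ∈ α then x ⟨j, h⟩ else k j)
    ∂(cubeMeasure {j // j ∈ α})

namespace Stmt12Aux
open Finset

variable {ι : Type*} [DecidableEq ι]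

lemma sum_pow_card (s : Finset ι) :
    ∑ t ∈ s.powerset, (-1 : ℂ) ^ t.card = if s = ∅ then 1 else 0 := by
  have := @Finset.sum_powerset_neg_one_pow_card ι _ s
  have h2 : ((∑ m ∈ s.powerset, (-1 : ℤ) ^ m.card : ℤ) : ℂ)
      = ∑ t ∈ s.powerset, (-1 : ℂ) ^ t.card := by push_cast; ring_nf
  rw [← h2, this]
  split <;> simp

lemma sdiff_sdiff_union (γ β σ : Finset ι) : (γ \ β) \ σ = γ \ (β ∪ σ) := by
  ext x; simp only [mem_sdiff, mem_union]; tauto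

lemma sum_pow_sdiff (s : Finset ι) :
    ∑ t ∈ s.powerset, (-1 : ℂ) ^ ((s \ t).card) = if s = ∅ then 1 else 0 := by
  rw [← sum_pow_card s]
  exact Finset.sum_nbij' (fun t => s \ t) (fun t => s \ t)
    (fun t ht => mem_powerset.mpr sdiff_subset)
    (fun t ht => mem_powerset.mpr sdiff_subset)
    (fun t ht => Finset.sdiff_sdiff_eq_self (mem_powerset.mp ht))
    (fun t ht => Finset.sdiff_sdiff_eq_self (mem_powerset.mp ht))
    (fun t ht => rfl)

lemma sum_interval_aux {β γ : Finset ι} (h : β ⊆ γ) (F : Finset ι → ℂ) :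
    ∑ α ∈ γ.powerset.filter (fun α => β ⊆ α), F α
      = ∑ σ ∈ (γ \ β).powerset, F (β ∪ σ) := by
  refine (Finset.sum_nbij' (fun σ => β ∪ σ) (fun α => α \ β) ?_ ?_ ?_ ?_ ?_).symm
  · intro σ hσ
    simp only [mem_powerset, mem_filter] at *
    exact ⟨union_subset h (hσ.trans sdiff_subset), subset_union_left⟩
  · intro α hα
    simp only [mem_powerset, mem_filter] at *
    exact sdiff_subset_sdiff hα.1 le_rfl
  · intro σ hσ
    simp only [mem_powerset] at hσ
    exact union_sdiff_cancel_left (disjoint_of_subset_right hσ disjoint_sdiff)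
  · intro α hα
    simp only [mem_powerset, mem_filter] at hα
    exact union_sdiff_of_subset hα.2
  · intro σ _; rfl

lemma sum_interval₁ {β γ : Finset ι} (h : β ⊆ γ) :
    ∑ α ∈ γ.powerset.filter (fun α => β ⊆ α), (-1 : ℂ) ^ ((α \ β).card)
      = if β = γ then 1 else 0 := by
  rw [sum_interval_aux h]
  have h1 : ∀ σ ∈ (γ \ β).powerset, (-1 : ℂ) ^ (((β ∪ σ) \ β).card) = (-1 : ℂ) ^ σ.card := by
    intro σ hσ
    simp only [mem_powerset] at hσ
    rw [union_sdiff_cancel_left (disjoint_of_subset_right hσ disjoint_sdiff)]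
  rw [Finset.sum_congr rfl h1, sum_pow_card]
  by_cases hb : β = γ
  · simp [hb]
  · rw [if_neg hb, if_neg fun hc => hb (h.antisymm (sdiff_eq_empty_iff_subset.mp hc))]

lemma sum_interval₂ {β γ : Finset ι} (h : β ⊆ γ) :
    ∑ α ∈ γ.powerset.filter (fun α => β ⊆ α), (-1 : ℂ) ^ ((γ \ α).card)
      = if β = γ then 1 else 0 := by
  rw [sum_interval_aux h]
  have h1 : ∀ σ ∈ (γ \ β).powerset, (-1 : ℂ) ^ ((γ \ (β ∪ σ)).card)
      = (-1 : ℂ) ^ (((γ \ β) \ σ).card) := by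
    intro σ _; rw [sdiff_sdiff_union]
  rw [Finset.sum_congr rfl h1, sum_pow_sdiff]
  by_cases hb : β = γ
  · simp [hb]
  · rw [if_neg hb, if_neg fun hc => hb (h.antisymm (sdiff_eq_empty_iff_subset.mp hc))]

lemma swap_pow (F : Finset ι → Finset ι → ℂ) (γ : Finset ι) :
    ∑ α ∈ γ.powerset, ∑ β ∈ α.powerset, F α β
      = ∑ β ∈ γ.powerset, ∑ α ∈ γ.powerset.filter (fun α => β ⊆ α), F α β := by
  have h1 : ∀ α ∈ γ.powerset, ∑ β ∈ α.powerset, F α β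
      = ∑ β ∈ γ.powerset, if β ⊆ α then F α β else 0 := by
    intro α hα
    rw [mem_powerset] at hα
    rw [← Finset.sum_filter]
    refine Finset.sum_congr ?_ fun _ _ => rfl
    ext β
    simp only [mem_powerset, mem_filter]
    exact ⟨fun hb => ⟨hb.trans hα, hb⟩, fun hb => hb.2⟩
  rw [Finset.sum_congr rfl h1, Finset.sum_comm]
  exact Finset.sum_congr rfl fun β _ => (Finset.sum_filter _ _).symm

lemma zeta_moebius (f : Finset ι → ℂ) (γ : Finset ι) :
    ∑ α ∈ γ.powerset, ∑ β ∈ α.powerset, (-1 : ℂ) ^ ((α \ β).card) * f β = f γ := by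
  rw [swap_pow]
  have h1 : ∀ β ∈ γ.powerset,
      ∑ α ∈ γ.powerset.filter (fun α => β ⊆ α), (-1 : ℂ) ^ ((α \ β).card) * f β
        = (if β = γ then 1 else 0) * f β := by
    intro β hβ
    rw [← Finset.sum_mul, sum_interval₁ (mem_powerset.mp hβ)]
  rw [Finset.sum_congr rfl h1]
  simp

lemma moebius_zeta (f : Finset ι → ℂ) (γ : Finset ι) :
    ∑ α ∈ γ.powerset, (-1 : ℂ) ^ ((γ \ α).card) * ∑ β ∈ α.powerset, f β = f γ := by
  have h0 : ∀ α ∈ γ.powerset, (-1 : ℂ) ^ ((γ \ α).card) * ∑ β ∈ α.powerset, f β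
      = ∑ β ∈ α.powerset, (-1 : ℂ) ^ ((γ \ α).card) * f β := by
    intro α _; rw [Finset.mul_sum]
  rw [Finset.sum_congr rfl h0, swap_pow]
  have h1 : ∀ β ∈ γ.powerset,
      ∑ α ∈ γ.powerset.filter (fun α => β ⊆ α), (-1 : ℂ) ^ ((γ \ α).card) * f β
        = (if β = γ then 1 else 0) * f β := by
    intro β hβ
    rw [← Finset.sum_mul, sum_interval₂ (mem_powerset.mp hβ)]
  rw [Finset.sum_congr rfl h1]
  simp

variable [Fintype ι]

lemma conv_delta (p q : Finset ι → ℂ)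
    (h : ∀ γ : Finset ι, (∑ α ∈ γ.powerset, p α) * (∑ β ∈ γ.powerset, q β) = 1)
    (γ : Finset ι) :
    ∑ z ∈ (univ ×ˢ univ : Finset (Finset ι × Finset ι)).filter (fun z => z.1 ∪ z.2 = γ),
        p z.1 * q z.2 = if γ = ∅ then 1 else 0 := by
  set conv : Finset ι → ℂ := fun δ =>
    ∑ z ∈ (univ ×ˢ univ : Finset (Finset ι × Finset ι)).filter (fun z => z.1 ∪ z.2 = δ),
      p z.1 * q z.2 with hconv
  have hZ : ∀ δ : Finset ι, ∑ δ' ∈ δ.powerset, conv δ' = 1 := by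
    intro δ
    have h1 : ∀ δ' ∈ δ.powerset,
        conv δ' = ∑ z ∈ (δ.powerset ×ˢ δ.powerset).filter (fun z => z.1 ∪ z.2 = δ'),
          p z.1 * q z.2 := by
      intro δ' hδ'
      rw [mem_powerset] at hδ'
      rw [hconv]
      refine Finset.sum_congr ?_ fun _ _ => rfl
      ext z
      simp only [mem_filter, mem_product, mem_powerset, mem_univ, true_and]
      constructor
      · rintro hz
        exact ⟨⟨(subset_union_left.trans hz.le).trans hδ',
          (subset_union_right.trans hz.le).trans hδ'⟩, hz⟩
      · rintro ⟨_, hz⟩; exact hz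
    have hf := Finset.sum_fiberwise_of_maps_to (s := δ.powerset ×ˢ δ.powerset)
      (t := δ.powerset) (g := fun z => z.1 ∪ z.2)
      (fun z hz => by
        simp only [mem_product, mem_powerset] at hz
        exact mem_powerset.mpr (union_subset hz.1 hz.2))
      (fun z => p z.1 * q z.2)
    rw [Finset.sum_congr rfl h1, hf, Finset.sum_product, ← Finset.sum_mul_sum, h δ]
  have := moebius_zeta conv γ
  rw [Finset.sum_congr rfl (fun α hα => by rw [hZ α, mul_one]), sum_pow_sdiff] at this
  exact this.symm



instance : IsProbabilityMeasure ((volume : Measure ℝ).restrict (Set.Ico 0 1)) := by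
  constructor
  simp

instance cubeProb (ι : Type*) [Fintype ι] : IsProbabilityMeasure (cubeMeasure ι) := by
  unfold cubeMeasure
  infer_instance

instance cubeSFinite (ι : Type*) [Fintype ι] : SFinite (cubeMeasure ι) := inferInstance

variable {N : ℕ}

/-- replace the coordinates in `s` by those of `x`. -/
def blend (s : Finset (Fin N)) (x k : Fin N → ℝ) : Fin N → ℝ :=
  fun j => if j ∈ s then x j else k j

lemma measurable_blend (s : Finset (Fin N)) :
    Measurable (fun p : (Fin N → ℝ) × (Fin N → ℝ) => blend s p.1 p.2) := by
  refine measurable_pi_lambda _ fun j => ?_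
  by_cases h : j ∈ s <;> simp only [blend, h, if_true, if_false]
  · exact (measurable_pi_apply j).comp measurable_fst
  · exact (measurable_pi_apply j).comp measurable_snd

section Equiv

variable (α : Finset (Fin N))

/-- coordinate-splitting equivalence -/
noncomputable def eqv (α : Finset (Fin N)) :
    (Fin N → ℝ) ≃ᵐ ({j // j ∈ α} → ℝ) × ({j // ¬ j ∈ α} → ℝ) :=
  MeasurableEquiv.piEquivPiSubtypeProd (fun _ : Fin N => ℝ) (fun j => j ∈ α)

lemma eqv_mp (α : Finset (Fin N)) :
    MeasurePreserving (eqv α) (cubeMeasure (Fin N))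
      ((cubeMeasure {j // j ∈ α}).prod (cubeMeasure {j // ¬ j ∈ α})) := by
  unfold cubeMeasure
  convert measurePreserving_piEquivPiSubtypeProd
    (fun _ : Fin N => (volume : Measure ℝ).restrict (Set.Ico 0 1)) (fun j => j ∈ α) using 2
  congr 1
  congr 1
  exact Subsingleton.elim _ _

lemma eqv_symm_apply (α : Finset (Fin N)) (z) (j : Fin N) :
    (eqv α).symm z j = if h : j ∈ α then z.1 ⟨j, h⟩ else z.2 ⟨j, h⟩ := rfl

lemma eqv_fst (α : Finset (Fin N)) (k : Fin N → ℝ) (j : {j // j ∈ α}) :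
    (eqv α k).1 j = k j := rfl

lemma eqv_snd (α : Finset (Fin N)) (k : Fin N → ℝ) (j : {j // ¬ j ∈ α}) :
    (eqv α k).2 j = k j := rfl

lemma mp_fst : MeasurePreserving (fun k => (eqv α k).1)
    (cubeMeasure (Fin N)) (cubeMeasure {j // j ∈ α}) := by
  have h1 : MeasurePreserving (Prod.fst)
      ((cubeMeasure {j // j ∈ α}).prod (cubeMeasure {j // ¬ j ∈ α}))
      (cubeMeasure {j // j ∈ α}) := by
    refine ⟨measurable_fst, ?_⟩
    rw [Measure.map_fst_prod]
    simp
  exact h1.comp (eqv_mp α)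

lemma mp_snd : MeasurePreserving (fun k => (eqv α k).2)
    (cubeMeasure (Fin N)) (cubeMeasure {j // ¬ j ∈ α}) := by
  have h1 : MeasurePreserving (Prod.snd)
      ((cubeMeasure {j // j ∈ α}).prod (cubeMeasure {j // ¬ j ∈ α}))
      (cubeMeasure {j // ¬ j ∈ α}) := by
    refine ⟨measurable_snd, ?_⟩
    rw [Measure.map_snd_prod]
    simp
  exact h1.comp (eqv_mp α)

lemma pI_eq (u : (Fin N → ℝ) → ℂ) (k : Fin N → ℝ) :
    partialIntegral α u k
      = ∫ x, u ((eqv α).symm (x, (eqv α k).2)) ∂(cubeMeasure {j // j ∈ α}) := rfl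

lemma eqv_symm_blend (α : Finset (Fin N)) (z : ({j // j ∈ α} → ℝ) × ({j // ¬ j ∈ α} → ℝ))
    (k : Fin N → ℝ) :
    blend α ((eqv α).symm z) k = fun j => if h : j ∈ α then z.1 ⟨j, h⟩ else k j := by
  funext j
  by_cases h : j ∈ α <;> simp [blend, h, eqv_symm_apply]

lemma sm_section (α : Finset (Fin N)) {u : (Fin N → ℝ) → ℂ} (hu : StronglyMeasurable u)
    (k : Fin N → ℝ) :
    StronglyMeasurable (fun x : {j // j ∈ α} → ℝ =>
      u (fun j => if h : j ∈ α then x ⟨j, h⟩ else k j)) := by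
  refine hu.comp_measurable (measurable_pi_lambda _ fun j => ?_)
  by_cases h : j ∈ α <;> simp only [h, dif_pos, dif_neg, not_false_iff]
  · exact measurable_pi_apply _
  · exact measurable_const

/-- L1: full-cube representation of the partial integral. -/
lemma pI_eq_blend (α : Finset (Fin N)) {u : (Fin N → ℝ) → ℂ} (hu : StronglyMeasurable u)
    (k : Fin N → ℝ) :
    partialIntegral α u k = ∫ x, u (blend α x k) ∂(cubeMeasure (Fin N)) := by
  have h1 : ∫ x, u (blend α x k) ∂(cubeMeasure (Fin N))
      = ∫ z, u (blend α ((eqv α).symm z) k)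
          ∂((cubeMeasure {j // j ∈ α}).prod (cubeMeasure {j // ¬ j ∈ α})) :=
    ((MeasurePreserving.symm (eqv α) (eqv_mp α)).integral_comp' (fun x => u (blend α x k))).symm
  rw [h1]
  have h2 : ∀ z, u (blend α ((eqv α).symm z) k)
      = u (fun j => if h : j ∈ α then z.1 ⟨j, h⟩ else k j) := by
    intro z; rw [eqv_symm_blend]
  simp only [h2]
  have h3 : ∫ z, u (fun j => if h : j ∈ α then z.1 ⟨j, h⟩ else k j)
          ∂((cubeMeasure {j // j ∈ α}).prod (cubeMeasure {j // ¬ j ∈ α}))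
      = ∫ x, u (fun j => if h : j ∈ α then x ⟨j, h⟩ else k j)
          ∂(cubeMeasure {j // j ∈ α}) := by
    have hmp : MeasurePreserving (Prod.fst)
        ((cubeMeasure {j // j ∈ α}).prod (cubeMeasure {j // ¬ j ∈ α}))
        (cubeMeasure {j // j ∈ α}) := by
      refine ⟨measurable_fst, ?_⟩
      rw [Measure.map_fst_prod]; simp
    have haes : AEStronglyMeasurable
        (fun x : {j // j ∈ α} → ℝ => u (fun j => if h : j ∈ α then x ⟨j, h⟩ else k j))
        (Measure.map Prod.fst
          ((cubeMeasure {j // j ∈ α}).prod (cubeMeasure {j // ¬ j ∈ α}))) := by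
      rw [hmp.map_eq]; exact (sm_section α hu k).aestronglyMeasurable
    have hint := integral_map (φ := (Prod.fst : _ × ({j // ¬ j ∈ α} → ℝ) → _))
      (μ := (cubeMeasure {j // j ∈ α}).prod (cubeMeasure {j // ¬ j ∈ α}))
      measurable_fst.aemeasurable haes
    rw [hmp.map_eq] at hint
    exact hint.symm
  rw [h3]
  rfl

/-- L2 -/
lemma sm_pI (α : Finset (Fin N)) {u : (Fin N → ℝ) → ℂ} (hu : StronglyMeasurable u) :
    StronglyMeasurable (partialIntegral α u) := by
  have : partialIntegral α u = fun k => ∫ x, u (blend α x k) ∂(cubeMeasure (Fin N)) := by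
    funext k; exact pI_eq_blend α hu k
  rw [this]
  exact StronglyMeasurable.integral_prod_right
    (f := fun k x => u (blend α x k))
    (hu.comp_measurable ((measurable_blend α).comp (measurable_swap)))

/-- L3: a.e. congruence -/
lemma pI_congr_ae (α : Finset (Fin N)) {u v : (Fin N → ℝ) → ℂ}
    (h : u =ᵐ[cubeMeasure (Fin N)] v) :
    partialIntegral α u =ᵐ[cubeMeasure (Fin N)] partialIntegral α v := by
  set μ₁ := cubeMeasure {j // j ∈ α}
  set μ₂ := cubeMeasure {j // ¬ j ∈ α}
  have h1 : (fun z : _ × _ => u ((eqv α).symm z)) =ᵐ[μ₁.prod μ₂]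
      (fun z => v ((eqv α).symm z)) :=
    (MeasurePreserving.symm (eqv α) (eqv_mp α)).quasiMeasurePreserving.ae_eq_comp h
  have h2 : (fun w : _ × _ => u ((eqv α).symm (Prod.swap w))) =ᵐ[μ₂.prod μ₁]
      (fun w => v ((eqv α).symm (Prod.swap w))) :=
    (Measure.measurePreserving_swap).quasiMeasurePreserving.ae_eq_comp h1
  have h3 : ∀ᵐ q ∂μ₂, ∀ᵐ x ∂μ₁, u ((eqv α).symm (x, q)) = v ((eqv α).symm (x, q)) :=
    Measure.ae_ae_of_ae_prod h2
  have h4 : ∀ᵐ q ∂μ₂, (∫ x, u ((eqv α).symm (x, q)) ∂μ₁)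
      = ∫ x, v ((eqv α).symm (x, q)) ∂μ₁ := by
    filter_upwards [h3] with q hq using integral_congr_ae hq
  have h5 : ∀ᵐ k ∂(cubeMeasure (Fin N)),
      (∫ x, u ((eqv α).symm (x, (eqv α k).2)) ∂μ₁)
        = ∫ x, v ((eqv α).symm (x, (eqv α k).2)) ∂μ₁ := by
    refine ae_of_ae_map (f := fun k => (eqv α k).2)
      (p := fun q => (∫ x, u ((eqv α).symm (x, q)) ∂μ₁)
        = ∫ x, v ((eqv α).symm (x, q)) ∂μ₁)
      (mp_snd α).measurable.aemeasurable ?_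
    rwa [(mp_snd α).map_eq]
  filter_upwards [h5] with k hk
  rw [pI_eq α u k, pI_eq α v k]
  exact hk

/-- L4: the pair-blend map is measure preserving. -/
lemma mp_blendPair (β : Finset (Fin N)) :
    MeasurePreserving (fun p : (Fin N → ℝ) × (Fin N → ℝ) => blend β p.2 p.1)
      ((cubeMeasure (Fin N)).prod (cubeMeasure (Fin N))) (cubeMeasure (Fin N)) := by
  set μ₁ := cubeMeasure {j // j ∈ β}
  set μ₂ := cubeMeasure {j // ¬ j ∈ β}
  have hmp : MeasurePreserving
      (fun p : (Fin N → ℝ) × (Fin N → ℝ) =>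
        (eqv β).symm ((eqv β p.2).1, (eqv β p.1).2))
      ((cubeMeasure (Fin N)).prod (cubeMeasure (Fin N))) (cubeMeasure (Fin N)) := by
    have hswap : MeasurePreserving Prod.swap
        ((cubeMeasure (Fin N)).prod (cubeMeasure (Fin N)))
        ((cubeMeasure (Fin N)).prod (cubeMeasure (Fin N))) :=
      Measure.measurePreserving_swap
    have hpm : MeasurePreserving
        (Prod.map (fun k => (eqv β k).1) (fun k => (eqv β k).2))
        ((cubeMeasure (Fin N)).prod (cubeMeasure (Fin N))) (μ₁.prod μ₂) :=
      (mp_fst β).prod (mp_snd β)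
    exact ((MeasurePreserving.symm (eqv β) (eqv_mp β)).comp hpm).comp hswap
  have : (fun p : (Fin N → ℝ) × (Fin N → ℝ) =>
      (eqv β).symm ((eqv β p.2).1, (eqv β p.1).2))
      = fun p : (Fin N → ℝ) × (Fin N → ℝ) => blend β p.2 p.1 := by
    funext p
    funext j
    by_cases h : j ∈ β <;> simp [eqv_symm_apply, blend, h, eqv_fst, eqv_snd]
  rwa [this] at hmp

/-- L5: slice integrability. -/
lemma ae_integrable_blend (γ : Finset (Fin N)) {u : (Fin N → ℝ) → ℂ}
    (hu : StronglyMeasurable u) (hi : Integrable u (cubeMeasure (Fin N))) :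
    ∀ᵐ k ∂(cubeMeasure (Fin N)),
      Integrable (fun z => u (blend γ z k)) (cubeMeasure (Fin N)) := by
  set μ₁ := cubeMeasure {j // j ∈ γ}
  set μ₂ := cubeMeasure {j // ¬ j ∈ γ}
  have h1 : Integrable (u ∘ (eqv γ).symm) (μ₁.prod μ₂) :=
    ((MeasurePreserving.symm (eqv γ) (eqv_mp γ)).integrable_comp hu.aestronglyMeasurable).mpr hi
  have h2 : ∀ᵐ q ∂μ₂, Integrable (fun x => u ((eqv γ).symm (x, q))) μ₁ :=
    h1.prod_left_ae
  have h3 : ∀ᵐ k ∂(cubeMeasure (Fin N)),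
      Integrable (fun x => u ((eqv γ).symm (x, (eqv γ k).2))) μ₁ := by
    refine ae_of_ae_map (f := fun k => (eqv γ k).2)
      (p := fun q => Integrable (fun x => u ((eqv γ).symm (x, q))) μ₁)
      (mp_snd γ).measurable.aemeasurable ?_
    rwa [(mp_snd γ).map_eq]
  filter_upwards [h3] with k hk
  have key : (fun z => u (blend γ z k))
      = (fun x => u ((eqv γ).symm (x, (eqv γ k).2))) ∘ (fun z => (eqv γ z).1) := by
    funext z
    simp only [Function.comp_apply]
    have hb : blend γ z k = (eqv γ).symm ((eqv γ z).1, (eqv γ k).2) := by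
      funext j
      by_cases h : j ∈ γ <;> simp [blend, eqv_symm_apply, h, eqv_fst, eqv_snd]
    rw [hb]
  rw [key]
  refine ((mp_fst γ).integrable_comp ?_).mpr hk
  exact (hu.comp_measurable
    ((eqv γ).symm.measurable.comp (measurable_prodMk_right))).aestronglyMeasurable

/-- L6 + integrability for L7. -/
lemma ae_pI_pI (α β : Finset (Fin N)) {u : (Fin N → ℝ) → ℂ}
    (hu : StronglyMeasurable u) (hi : Integrable u (cubeMeasure (Fin N))) :
    ∀ᵐ k ∂(cubeMeasure (Fin N)),
      partialIntegral α (partialIntegral β u) k = partialIntegral (α ∪ β) u k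
      ∧ Integrable (fun x => partialIntegral β u (blend α x k)) (cubeMeasure (Fin N)) := by
  filter_upwards [ae_integrable_blend (α ∪ β) hu hi] with k hk
  set μ := cubeMeasure (Fin N) with hμ
  have hT := mp_blendPair (N := N) β
  have hsm_g : StronglyMeasurable (fun z => u (blend (α ∪ β) z k)) :=
    hu.comp_measurable ((measurable_blend (α ∪ β)).comp
      (measurable_id.prodMk measurable_const))
  have HK : Integrable
      (fun p : (Fin N → ℝ) × (Fin N → ℝ) => u (blend (α ∪ β) (blend β p.2 p.1) k))
      (μ.prod μ) :=
    (hT.integrable_comp hsm_g.aestronglyMeasurable).mpr hk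
  have key : ∀ x, partialIntegral β u (blend α x k)
      = ∫ y, u (blend (α ∪ β) (blend β y x) k) ∂μ := by
    intro x
    rw [pI_eq_blend β hu]
    refine integral_congr_ae (Filter.Eventually.of_forall fun y => ?_)
    show u (blend β y (blend α x k)) = u (blend (α ∪ β) (blend β y x) k)
    have hb2 : blend β y (blend α x k) = blend (α ∪ β) (blend β y x) k := by
      funext j
      by_cases hb : j ∈ β <;> by_cases ha : j ∈ α <;>
        simp [blend, hb, ha, Finset.mem_union]
    rw [hb2]
  refine ⟨?_, ?_⟩
  · rw [pI_eq_blend α (sm_pI β hu)]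
    calc ∫ x, partialIntegral β u (blend α x k) ∂μ
        = ∫ x, ∫ y, u (blend (α ∪ β) (blend β y x) k) ∂μ ∂μ := by
          refine integral_congr_ae (Filter.Eventually.of_forall fun x => ?_)
          exact key x
      _ = ∫ p, u (blend (α ∪ β) (blend β p.2 p.1) k) ∂(μ.prod μ) := integral_integral HK
      _ = ∫ z, u (blend (α ∪ β) z k) ∂μ := by
          have haes : AEStronglyMeasurable (fun z => u (blend (α ∪ β) z k))
              (Measure.map (fun p : (Fin N → ℝ) × (Fin N → ℝ) => blend β p.2 p.1)
                (μ.prod μ)) := by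
            rw [hT.map_eq]; exact hsm_g.aestronglyMeasurable
          have h := integral_map
            (φ := fun p : (Fin N → ℝ) × (Fin N → ℝ) => blend β p.2 p.1)
            hT.measurable.aemeasurable haes
          rw [hT.map_eq] at h
          exact h.symm
      _ = partialIntegral (α ∪ β) u k := (pI_eq_blend (α ∪ β) hu k).symm
  · have h2 := HK.integral_prod_left
    have heq : (fun x => ∫ y, u (blend (α ∪ β) (blend β y x) k) ∂μ)
        = fun x => partialIntegral β u (blend α x k) := by
      funext x; exact (key x).symm
    rwa [heq] at h2

/-- L7 -/
lemma ae_pI_sum (α : Finset (Fin N)) (q : Finset (Fin N) → ℂ) {u : (Fin N → ℝ) → ℂ}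
    (hu : StronglyMeasurable u) (hi : Integrable u (cubeMeasure (Fin N))) :
    ∀ᵐ k ∂(cubeMeasure (Fin N)),
      partialIntegral α (fun k' => ∑ β : Finset (Fin N), q β * partialIntegral β u k') k
        = ∑ β : Finset (Fin N), q β * partialIntegral (α ∪ β) u k := by
  have hall := ae_all_iff.mpr fun β : Finset (Fin N) => ae_pI_pI α β hu hi
  filter_upwards [hall] with k hk
  have hsum_sm : StronglyMeasurable
      (fun k' => ∑ β : Finset (Fin N), q β * partialIntegral β u k') :=
    Finset.stronglyMeasurable_fun_sum _ fun β _ => (sm_pI β hu).const_mul (q β)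
  rw [pI_eq_blend α hsum_sm]
  rw [integral_finset_sum _ fun β _ => ((hk β).2.const_mul (q β))]
  refine Finset.sum_congr rfl fun β _ => ?_
  rw [integral_const_mul _ _, ← pI_eq_blend α (sm_pI β hu) k, (hk β).1]

lemma pI_empty (u : (Fin N → ℝ) → ℂ) (k : Fin N → ℝ) :
    partialIntegral (∅ : Finset (Fin N)) u k = u k := by
  unfold partialIntegral
  have h : (fun x : {j // j ∈ (∅ : Finset (Fin N))} → ℝ =>
      u (fun j => if h : j ∈ (∅ : Finset (Fin N)) then x ⟨j, h⟩ else k j))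
      = fun _ => u k := by
    funext x
    congr 1
  rw [h, integral_const]
  simp

lemma comp_eq_one (p q : Finset (Fin N) → ℂ)
    (S T : Lp ℂ 2 (cubeMeasure (Fin N)) →L[ℂ] Lp ℂ 2 (cubeMeasure (Fin N)))
    (hS : ∀ u : Lp ℂ 2 (cubeMeasure (Fin N)),
      ⇑(S u) =ᵐ[cubeMeasure (Fin N)] fun k =>
        ∑ α : Finset (Fin N), p α * partialIntegral α (⇑u) k)
    (hT : ∀ u : Lp ℂ 2 (cubeMeasure (Fin N)),
      ⇑(T u) =ᵐ[cubeMeasure (Fin N)] fun k =>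
        ∑ β : Finset (Fin N), q β * partialIntegral β (⇑u) k)
    (hconv : ∀ γ : Finset (Fin N),
      ∑ z ∈ ((Finset.univ ×ˢ Finset.univ) :
          Finset (Finset (Fin N) × Finset (Fin N))).filter (fun z => z.1 ∪ z.2 = γ),
        p z.1 * q z.2 = if γ = ∅ then 1 else 0) :
    S * T = 1 := by
  refine ContinuousLinearMap.ext fun u₀ => ?_
  rw [ContinuousLinearMap.mul_apply, ContinuousLinearMap.one_apply]
  refine Lp.ext ?_
  have hu : StronglyMeasurable (⇑u₀) := Lp.stronglyMeasurable u₀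
  have hi : Integrable (⇑u₀) (cubeMeasure (Fin N)) := (Lp.memLp u₀).integrable one_le_two
  have h1 := hS (T u₀)
  have h2 : ∀ᵐ k ∂(cubeMeasure (Fin N)), ∀ α : Finset (Fin N),
      partialIntegral α (⇑(T u₀)) k
        = partialIntegral α (fun k' => ∑ β : Finset (Fin N),
            q β * partialIntegral β (⇑u₀) k') k :=
    ae_all_iff.mpr fun α => pI_congr_ae α (hT u₀)
  have h3 : ∀ᵐ k ∂(cubeMeasure (Fin N)), ∀ α : Finset (Fin N),
      partialIntegral α (fun k' => ∑ β : Finset (Fin N),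
          q β * partialIntegral β (⇑u₀) k') k
        = ∑ β : Finset (Fin N), q β * partialIntegral (α ∪ β) (⇑u₀) k :=
    ae_all_iff.mpr fun α => ae_pI_sum α q hu hi
  filter_upwards [h1, h2, h3] with k hk1 hk2 hk3
  rw [hk1]
  show (∑ α : Finset (Fin N), p α * partialIntegral α (⇑(T u₀)) k) = u₀ k
  calc ∑ α : Finset (Fin N), p α * partialIntegral α (⇑(T u₀)) k
      = ∑ α : Finset (Fin N), p α
          * ∑ β : Finset (Fin N), q β * partialIntegral (α ∪ β) (⇑u₀) k := by
        refine Finset.sum_congr rfl fun α _ => ?_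
        rw [hk2 α, hk3 α]
    _ = ∑ z ∈ ((Finset.univ ×ˢ Finset.univ) :
          Finset (Finset (Fin N) × Finset (Fin N))),
        p z.1 * q z.2 * partialIntegral (z.1 ∪ z.2) (⇑u₀) k := by
        rw [Finset.sum_product]
        refine Finset.sum_congr rfl fun α _ => ?_
        rw [Finset.mul_sum]
        refine Finset.sum_congr rfl fun β _ => ?_
        ring
    _ = ∑ γ : Finset (Fin N), ∑ z ∈ ((Finset.univ ×ˢ Finset.univ) :
          Finset (Finset (Fin N) × Finset (Fin N))).filter (fun z => z.1 ∪ z.2 = γ),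
        p z.1 * q z.2 * partialIntegral (z.1 ∪ z.2) (⇑u₀) k :=
      (Finset.sum_fiberwise_of_maps_to (fun z _ => Finset.mem_univ _) _).symm
    _ = ∑ γ : Finset (Fin N),
        (if γ = ∅ then 1 else 0) * partialIntegral γ (⇑u₀) k := by
        refine Finset.sum_congr rfl fun γ _ => ?_
        rw [← hconv γ, Finset.sum_mul]
        refine Finset.sum_congr rfl fun z hz => ?_
        rw [(Finset.mem_filter.mp hz).2]
    _ = partialIntegral (∅ : Finset (Fin N)) (⇑u₀) k := by
        rw [Finset.sum_congr rfl
          (fun γ _ => ite_mul (γ = ∅) (1 : ℂ) 0 (partialIntegral γ (⇑u₀) k))]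
        simp
    _ = u₀ k := pI_empty (⇑u₀) k

end Equiv

end Stmt12Aux

/-- if all the numbers `b_α = Σ_{β ⊆ α} a_β` are nonzero, the
operator `𝒜u = Σ_α a_α ∫_{[0,1)^{|α|}} u(· with α-coordinates replaced) dx_α` is
invertible in the bounded operators on `L²([0,1)^N)`, with inverse of the same
form with coefficients `c_α = Σ_{β ⊆ α} (−1)^{|α∖β|} b_β⁻¹`. -/



theorem stmt_12 (N : ℕ) (hN : 0 < N) (a : Finset (Fin N) → ℂ)
    (hb : ∀ α : Finset (Fin N), ∑ β ∈ α.powerset, a β ≠ 0)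
    (𝒜 ℬ : Lp ℂ 2 (cubeMeasure (Fin N)) →L[ℂ] Lp ℂ 2 (cubeMeasure (Fin N)))
    (h𝒜 : ∀ u : Lp ℂ 2 (cubeMeasure (Fin N)),
      ⇑(𝒜 u) =ᵐ[cubeMeasure (Fin N)] fun k =>
        ∑ α : Finset (Fin N), a α * partialIntegral α (⇑u) k)
    (hℬ : ∀ u : Lp ℂ 2 (cubeMeasure (Fin N)),
      ⇑(ℬ u) =ᵐ[cubeMeasure (Fin N)] fun k =>
        ∑ α : Finset (Fin N),
          (∑ β ∈ α.powerset,
            (-1 : ℂ) ^ ((α \ β).card) * (∑ γ ∈ β.powerset, a γ)⁻¹) *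
          partialIntegral α (⇑u) k) :
    𝒜 * ℬ = 1 ∧ ℬ * 𝒜 = 1 := by
  have h1 : ∀ γ : Finset (Fin N),
      (∑ α ∈ γ.powerset, a α)
        * (∑ β ∈ γ.powerset, ∑ δ ∈ β.powerset,
            (-1 : ℂ) ^ ((β \ δ).card) * (∑ γ' ∈ δ.powerset, a γ')⁻¹) = 1 := by
    intro γ
    rw [Stmt12Aux.zeta_moebius (fun δ => (∑ γ' ∈ δ.powerset, a γ')⁻¹) γ]
    exact mul_inv_cancel₀ (hb γ)
  have h2 : ∀ γ : Finset (Fin N),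
      (∑ α ∈ γ.powerset, ∑ δ ∈ α.powerset,
            (-1 : ℂ) ^ ((α \ δ).card) * (∑ γ' ∈ δ.powerset, a γ')⁻¹)
        * (∑ β ∈ γ.powerset, a β) = 1 := by
    intro γ
    rw [mul_comm]
    exact h1 γ
  constructor
  · exact Stmt12Aux.comp_eq_one a
      (fun α => ∑ β ∈ α.powerset, (-1 : ℂ) ^ ((α \ β).card) * (∑ γ ∈ β.powerset, a γ)⁻¹)
      𝒜 ℬ h𝒜 hℬ
      (Stmt12Aux.conv_delta a
        (fun α => ∑ β ∈ α.powerset, (-1 : ℂ) ^ ((α \ β).card) * (∑ γ ∈ β.powerset, a γ)⁻¹)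
        h1)
  · exact Stmt12Aux.comp_eq_one
      (fun α => ∑ β ∈ α.powerset, (-1 : ℂ) ^ ((α \ β).card) * (∑ γ ∈ β.powerset, a γ)⁻¹)
      a ℬ 𝒜 hℬ h𝒜
      (Stmt12Aux.conv_delta
        (fun α => ∑ β ∈ α.powerset, (-1 : ℂ) ^ ((α \ β).card) * (∑ γ ∈ β.powerset, a γ)⁻¹)
        a h2)
end

section
/- Let N be a positive integer and let L² be the Hilbert space of square-integrable complex functions on [0,1)^N with Lebesgue measure. The bounded operator (𝒜u)(k) = Σ_{α ⊆ {1,...,N}} ∫_{[0,1)^{|α|}} u(k with coordinates in α replaced by x_α) dx_α is invertible, and its inverse is (𝒜^{-1}u)(k) = Σ_{α ⊆ {1,...,N}} (−1/2)^{|α|} ∫_{[0,1)^{|α|}} u(k with coordinates in α replaced by x_α) dx_α. -/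
open MeasureTheory

section Aux

instance : IsProbabilityMeasure ((volume : Measure ℝ).restrict (Set.Ico 0 1)) :=
  ⟨by simp⟩

lemma pi_fintype_irrel {ι : Type*} {i1 i2 : Fintype ι} :
    @Measure.pi ι (fun _ => ℝ) i1 (fun _ => inferInstance)
        (fun _ => (volume : Measure ℝ).restrict (Set.Ico 0 1))
      = @Measure.pi ι (fun _ => ℝ) i2 (fun _ => inferInstance)
        (fun _ => (volume : Measure ℝ).restrict (Set.Ico 0 1)) := by
  cases Subsingleton.elim i1 i2
  rfl

instance cubeMeasure_prob (ι : Type*) {_ : Fintype ι} : IsProbabilityMeasure (cubeMeasure ι) := by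
  unfold cubeMeasure; infer_instance

instance cubeMeasure_sfinite (ι : Type*) {_ : Fintype ι} : SFinite (cubeMeasure ι) := by
  unfold cubeMeasure; infer_instance

lemma partialIntegral_def' {N : ℕ} (α : Finset (Fin N)) (u : (Fin N → ℝ) → ℂ)
    (k : Fin N → ℝ) :
    partialIntegral α u k
      = ∫ x : {j // j ∈ α} → ℝ, u (Function.updateFinset k α x)
          ∂(cubeMeasure {j // j ∈ α}) := rfl

/-- Precomposition with an injective reindexing is measure preserving for cubes. -/
lemma mp_comp_inj {ι κ : Type*} [Fintype ι] [Fintype κ] (g : κ → ι)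
    (hg : Function.Injective g) :
    MeasurePreserving (fun (x : ι → ℝ) (j : κ) => x (g j))
      (cubeMeasure ι) (cubeMeasure κ) := by
  classical
  constructor
  · exact measurable_pi_lambda _ fun j => measurable_pi_apply _
  · unfold cubeMeasure
    refine (Measure.pi_eq fun s hs => ?_).symm
    have hT : Measurable (fun (x : ι → ℝ) (j : κ) => x (g j)) :=
      measurable_pi_lambda _ fun j => measurable_pi_apply _
    rw [Measure.map_apply hT (MeasurableSet.univ_pi hs)]
    set S' : ι → Set ℝ := fun i => if h : ∃ j, g j = i then s h.choose else Set.univ with hS'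
    have hpre : (fun (x : ι → ℝ) (j : κ) => x (g j)) ⁻¹' Set.univ.pi s = Set.univ.pi S' := by
      ext x
      simp only [Set.mem_preimage, Set.mem_pi, Set.mem_univ, true_implies]
      constructor
      · intro hx i
        simp only [hS']
        split_ifs with h
        · have hc := hx h.choose
          rwa [h.choose_spec] at hc
        · exact Set.mem_univ _
      · intro hx j
        have h : ∃ j', g j' = g j := ⟨j, rfl⟩
        have := hx (g j)
        simp only [hS', dif_pos h] at this
        have hcs : h.choose = j := hg h.choose_spec
        rwa [hcs] at this
    rw [hpre]
    show (Measure.pi _) _ = _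
    rw [Measure.pi_pi]
    have hkey : ∀ j : κ, ((volume : Measure ℝ).restrict (Set.Ico 0 1)) (S' (g j))
        = ((volume : Measure ℝ).restrict (Set.Ico 0 1)) (s j) := by
      intro j
      have h : ∃ j', g j' = g j := ⟨j, rfl⟩
      have hcs : h.choose = j := hg h.choose_spec
      simp only [hS', dif_pos h, hcs]
    calc ∏ i : ι, ((volume : Measure ℝ).restrict (Set.Ico 0 1)) (S' i)
        = ∏ i ∈ Finset.univ.image g, ((volume : Measure ℝ).restrict (Set.Ico 0 1)) (S' i) := by
          refine (Finset.prod_subset (Finset.subset_univ _) fun i _ hi => ?_).symm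
          have hni : ¬∃ j, g j = i := by
            intro ⟨j, hj⟩
            exact hi (Finset.mem_image.2 ⟨j, Finset.mem_univ _, hj⟩)
          simp only [hS', dif_neg hni]
          exact measure_univ
      _ = ∏ j : κ, ((volume : Measure ℝ).restrict (Set.Ico 0 1)) (S' (g j)) :=
          Finset.prod_image fun a _ b _ h => hg h
      _ = ∏ j : κ, ((volume : Measure ℝ).restrict (Set.Ico 0 1)) (s j) := by
          exact Finset.prod_congr rfl fun j _ => hkey j

lemma ae_comp_inj {ι κ : Type*} [Fintype ι] [Fintype κ] (g : κ → ι)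
    (hg : Function.Injective g) {Q : (κ → ℝ) → Prop}
    (h : ∀ᵐ y ∂cubeMeasure κ, Q y) :
    ∀ᵐ x ∂cubeMeasure ι, Q (fun j => x (g j)) :=
  (mp_comp_inj g hg).quasiMeasurePreserving.ae h

variable {N : ℕ}

/-- The measure preserving splitting of the cube along a finset of coordinates. -/
lemma mp_split (γ : Finset (Fin N)) :
    MeasurePreserving (MeasurableEquiv.piEquivPiSubtypeProd (fun _ : Fin N => ℝ) (· ∈ γ))
      (cubeMeasure (Fin N))
      ((cubeMeasure {j // j ∈ γ}).prod (cubeMeasure {j // ¬ j ∈ γ})) := by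
  unfold cubeMeasure
  convert measurePreserving_piEquivPiSubtypeProd
    (fun _ : Fin N => (volume : Measure ℝ).restrict (Set.Ico 0 1)) (· ∈ γ) using 2 <;>
    exact pi_fintype_irrel

lemma updateFinset_eq_symm (γ : Finset (Fin N)) (z : {j // j ∈ γ} → ℝ) (k : Fin N → ℝ) :
    (MeasurableEquiv.piEquivPiSubtypeProd (fun _ : Fin N => ℝ) (· ∈ γ)).symm
        (z, fun j : {j // ¬ j ∈ γ} => k j)
      = Function.updateFinset k γ z := by
  funext j
  by_cases h : j ∈ γ <;>
    simp [MeasurableEquiv.piEquivPiSubtypeProd, Equiv.piEquivPiSubtypeProd,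
      Function.updateFinset, h]

lemma partialIntegral_congr_ae {u v : (Fin N → ℝ) → ℂ} (α : Finset (Fin N))
    (h : u =ᵐ[cubeMeasure (Fin N)] v) :
    (fun k => partialIntegral α u k) =ᵐ[cubeMeasure (Fin N)]
      fun k => partialIntegral α v k := by
  classical
  set e := MeasurableEquiv.piEquivPiSubtypeProd (fun _ : Fin N => ℝ) (· ∈ α) with he
  have mpsymm : MeasurePreserving e.symm
      ((cubeMeasure {j // j ∈ α}).prod (cubeMeasure {j // ¬ j ∈ α}))
      (cubeMeasure (Fin N)) := (mp_split α).symm e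
  have h1 : (fun z => u (e.symm z)) =ᵐ[(cubeMeasure {j // j ∈ α}).prod
      (cubeMeasure {j // ¬ j ∈ α})] (fun z => v (e.symm z)) :=
    mpsymm.quasiMeasurePreserving.ae_eq_comp h
  have h2 : (fun z : ({j // ¬ j ∈ α} → ℝ) × ({j // j ∈ α} → ℝ) => u (e.symm z.swap))
      =ᵐ[(cubeMeasure {j // ¬ j ∈ α}).prod (cubeMeasure {j // j ∈ α})]
      (fun z => v (e.symm z.swap)) :=
    (Measure.measurePreserving_swap).quasiMeasurePreserving.ae_eq_comp h1
  have h3 : ∀ᵐ t ∂cubeMeasure {j // ¬ j ∈ α},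
      ∀ᵐ x ∂cubeMeasure {j // j ∈ α}, u (e.symm (x, t)) = v (e.symm (x, t)) :=
    Measure.ae_ae_of_ae_prod h2
  have h4 : ∀ᵐ t ∂cubeMeasure {j // ¬ j ∈ α},
      (∫ x, u (e.symm (x, t)) ∂cubeMeasure {j // j ∈ α})
        = ∫ x, v (e.symm (x, t)) ∂cubeMeasure {j // j ∈ α} :=
    h3.mono fun t ht => integral_congr_ae ht
  have h5 := ae_comp_inj (fun j : {j // ¬ j ∈ α} => (j : Fin N))
    Subtype.val_injective h4
  refine h5.mono fun k hk => ?_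
  show partialIntegral α u k = partialIntegral α v k
  rw [partialIntegral_def', partialIntegral_def']
  have hrw : ∀ w : (Fin N → ℝ) → ℂ, ∀ x : {j // j ∈ α} → ℝ,
      w (Function.updateFinset k α x) = w (e.symm (x, fun j : {j // ¬ j ∈ α} => k j)) := by
    intro w x; rw [updateFinset_eq_symm]
  simp only [hrw u, hrw v]
  exact hk

/-- Key lemma: composition of partial integrals, together with the integrability
needed to interchange with finite sums. -/
lemma partialIntegral_comp (u : (Fin N → ℝ) → ℂ)
    (hu : Integrable u (cubeMeasure (Fin N))) (α β : Finset (Fin N)) :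
    ∀ᵐ k ∂cubeMeasure (Fin N),
      Integrable (fun x : {j // j ∈ α} → ℝ =>
          partialIntegral β u (Function.updateFinset k α x))
        (cubeMeasure {j // j ∈ α}) ∧
      partialIntegral α (partialIntegral β u) k = partialIntegral (α ∪ β) u k := by
  classical
  rw [← Finset.sdiff_union_self_eq_union (s := α) (t := β)]
  have hdisj : Disjoint (α \ β) β := Finset.sdiff_disjoint
  set e := MeasurableEquiv.piEquivPiSubtypeProd (fun _ : Fin N => ℝ) (· ∈ (α \ β ∪ β)) with he
  set e2 := MeasurableEquiv.piFinsetUnion (fun _ : Fin N => ℝ) hdisj with he2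
  have mpe2 : MeasurePreserving e2
      ((cubeMeasure {j // j ∈ α \ β}).prod (cubeMeasure {j // j ∈ β}))
      (cubeMeasure {j // j ∈ (α \ β ∪ β)}) :=
    measurePreserving_piFinsetUnion hdisj
      (fun _ => (volume : Measure ℝ).restrict (Set.Ico 0 1))
  have mpsymm : MeasurePreserving e.symm
      ((cubeMeasure {j // j ∈ (α \ β ∪ β)}).prod (cubeMeasure {j // ¬ j ∈ (α \ β ∪ β)}))
      (cubeMeasure (Fin N)) := (mp_split (α \ β ∪ β)).symm e
  have hF : Integrable (fun z : ({j // j ∈ (α \ β ∪ β)} → ℝ) × ({j // ¬ j ∈ (α \ β ∪ β)} → ℝ) => u (e.symm z))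
      ((cubeMeasure {j // j ∈ (α \ β ∪ β)}).prod (cubeMeasure {j // ¬ j ∈ (α \ β ∪ β)})) :=
    (mpsymm.integrable_comp hu.aestronglyMeasurable).2 hu
  have hslice : ∀ᵐ t ∂cubeMeasure {j // ¬ j ∈ (α \ β ∪ β)},
      Integrable (fun z => u (e.symm (z, t))) (cubeMeasure {j // j ∈ (α \ β ∪ β)}) :=
    hF.prod_left_ae
  -- the restriction map
  set r1 : ({j // j ∈ α} → ℝ) → ({j // j ∈ α \ β} → ℝ) :=
    fun x j => x ⟨(j : Fin N), (Finset.mem_sdiff.1 j.2).1⟩ with hr1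
  have mpr1 : MeasurePreserving r1 (cubeMeasure {j // j ∈ α}) (cubeMeasure {j // j ∈ α \ β}) :=
    mp_comp_inj (fun j : {j // j ∈ α \ β} =>
        (⟨(j : Fin N), (Finset.mem_sdiff.1 j.2).1⟩ : {j // j ∈ α}))
      (fun a b hab => by have h := congrArg Subtype.val hab; exact Subtype.ext h)
  have main : ∀ᵐ t ∂cubeMeasure {j // ¬ j ∈ (α \ β ∪ β)},
      Integrable (fun x' : {j // j ∈ α \ β} → ℝ =>
          ∫ y, u (e.symm (e2 (x', y), t)) ∂cubeMeasure {j // j ∈ β})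
        (cubeMeasure {j // j ∈ α \ β}) ∧
      (∫ x', ∫ y, u (e.symm (e2 (x', y), t)) ∂cubeMeasure {j // j ∈ β}
          ∂cubeMeasure {j // j ∈ α \ β})
        = ∫ z, u (e.symm (z, t)) ∂cubeMeasure {j // j ∈ (α \ β ∪ β)} := by
    refine hslice.mono fun t ht => ?_
    have hwe : Integrable (fun p : ({j // j ∈ α \ β} → ℝ) × ({j // j ∈ β} → ℝ) =>
        u (e.symm (e2 p, t)))
        ((cubeMeasure {j // j ∈ α \ β}).prod (cubeMeasure {j // j ∈ β})) :=
      (mpe2.integrable_comp ht.aestronglyMeasurable).2 ht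
    constructor
    · exact hwe.integral_prod_left
    · calc (∫ x', ∫ y, u (e.symm (e2 (x', y), t)) ∂cubeMeasure {j // j ∈ β}
            ∂cubeMeasure {j // j ∈ α \ β})
          = ∫ p, u (e.symm (e2 p, t))
              ∂(cubeMeasure {j // j ∈ α \ β}).prod (cubeMeasure {j // j ∈ β}) :=
            integral_integral hwe
        _ = ∫ z, u (e.symm (z, t)) ∂cubeMeasure {j // j ∈ (α \ β ∪ β)} :=
            mpe2.integral_comp e2.measurableEmbedding (fun z => u (e.symm (z, t)))
  have main' := ae_comp_inj (fun j : {j // ¬ j ∈ (α \ β ∪ β)} => (j : Fin N))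
    Subtype.val_injective main
  refine main'.mono fun k hk => ?_
  set t : {j // ¬ j ∈ (α \ β ∪ β)} → ℝ := fun j => k j with htdef
  have hupd : ∀ z : {j // j ∈ (α \ β ∪ β)} → ℝ, e.symm (z, t) = Function.updateFinset k (α \ β ∪ β) z :=
    fun z => updateFinset_eq_symm (α \ β ∪ β) z k
  have hpoint : ∀ x : {j // j ∈ α} → ℝ,
      partialIntegral β u (Function.updateFinset k α x)
        = ∫ y, u (e.symm (e2 (r1 x, y), t)) ∂cubeMeasure {j // j ∈ β} := by
    intro x
    rw [partialIntegral_def']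
    have harg : ∀ y : {j // j ∈ β} → ℝ,
        Function.updateFinset (Function.updateFinset k α x) β y
          = e.symm (e2 (r1 x, y), t) := by
      intro y
      rw [hupd]
      have h1 : Function.updateFinset (Function.updateFinset k α x) β y
          = Function.updateFinset (Function.updateFinset k (α \ β) (r1 x)) β y := by
        funext j
        by_cases hb : j ∈ β
        · simp [Function.updateFinset, hb]
        · by_cases ha : j ∈ α
          · have hs : j ∈ α \ β := Finset.mem_sdiff.2 ⟨ha, hb⟩
            simp [Function.updateFinset, hb, ha, hs, hr1]
          · have hs : ¬ j ∈ α \ β := fun hj => ha (Finset.mem_sdiff.1 hj).1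
            simp [Function.updateFinset, hb, ha, hs]
      rw [h1, Function.updateFinset_updateFinset hdisj]
      rfl
    simp only [harg]
  constructor
  · have : (fun x : {j // j ∈ α} → ℝ =>
        partialIntegral β u (Function.updateFinset k α x))
        = (fun x' : {j // j ∈ α \ β} → ℝ =>
            ∫ y, u (e.symm (e2 (x', y), t)) ∂cubeMeasure {j // j ∈ β}) ∘ r1 := by
      funext x; exact hpoint x
    rw [this]
    exact (mpr1.integrable_comp hk.1.aestronglyMeasurable).2 hk.1
  · rw [partialIntegral_def']
    calc (∫ x, partialIntegral β u (Function.updateFinset k α x)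
            ∂cubeMeasure {j // j ∈ α})
        = ∫ x, (fun x' => ∫ y, u (e.symm (e2 (x', y), t)) ∂cubeMeasure {j // j ∈ β}) (r1 x)
            ∂cubeMeasure {j // j ∈ α} := by
          exact integral_congr_ae (Filter.Eventually.of_forall fun x => hpoint x)
      _ = ∫ x', ∫ y, u (e.symm (e2 (x', y), t)) ∂cubeMeasure {j // j ∈ β}
            ∂cubeMeasure {j // j ∈ α \ β} := by
          rw [← mpr1.map_eq]
          exact (integral_map mpr1.measurable.aemeasurable
            (by rw [mpr1.map_eq]; exact hk.1.aestronglyMeasurable)).symm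
      _ = ∫ z, u (e.symm (z, t)) ∂cubeMeasure {j // j ∈ (α \ β ∪ β)} := hk.2
      _ = partialIntegral (α \ β ∪ β) u k := by
          rw [partialIntegral_def']
          exact integral_congr_ae (Filter.Eventually.of_forall fun z => by dsimp only; rw [hupd z])

/-- Applying a partial integral to an (a.e.) linear combination of partial integrals. -/
lemma partialIntegral_sum_ae (u : (Fin N → ℝ) → ℂ)
    (hu : Integrable u (cubeMeasure (Fin N))) (c : Finset (Fin N) → ℂ)
    (v : (Fin N → ℝ) → ℂ)
    (hv : v =ᵐ[cubeMeasure (Fin N)]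
      fun k => ∑ β : Finset (Fin N), c β * partialIntegral β u k)
    (α : Finset (Fin N)) :
    (fun k => partialIntegral α v k) =ᵐ[cubeMeasure (Fin N)]
      fun k => ∑ β : Finset (Fin N), c β * partialIntegral (α ∪ β) u k := by
  classical
  have h1 := partialIntegral_congr_ae α hv
  have h2 : ∀ᵐ k ∂cubeMeasure (Fin N), ∀ β : Finset (Fin N),
      Integrable (fun x : {j // j ∈ α} → ℝ =>
          partialIntegral β u (Function.updateFinset k α x))
        (cubeMeasure {j // j ∈ α}) ∧
      partialIntegral α (partialIntegral β u) k = partialIntegral (α ∪ β) u k :=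
    ae_all_iff.2 fun β => partialIntegral_comp u hu α β
  filter_upwards [h1, h2] with k hk1 hk2
  rw [hk1]
  have hlin : partialIntegral α
      (fun k' => ∑ β : Finset (Fin N), c β * partialIntegral β u k') k
      = ∑ β : Finset (Fin N), c β * partialIntegral α (partialIntegral β u) k := by
    rw [partialIntegral_def']
    rw [integral_finset_sum _ fun β _ => ((hk2 β).1.const_mul (c β))]
    refine Finset.sum_congr rfl fun β _ => ?_
    rw [integral_const_mul]
    rfl
  rw [hlin]
  exact Finset.sum_congr rfl fun β _ => by rw [(hk2 β).2]

/-- The combinatorial identity: `∑_{α,β} (-1/2)^{|β|} f(α ∪ β) = f ∅`. -/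
lemma comb {N : ℕ} (f : Finset (Fin N) → ℂ) :
    ∑ α : Finset (Fin N), ∑ β : Finset (Fin N),
      (-(1:ℂ)/2) ^ β.card * f (α ∪ β) = f ∅ := by
  classical
  rw [← Finset.sum_product']
  rw [← Finset.sum_fiberwise_of_maps_to
    (g := fun p : Finset (Fin N) × Finset (Fin N) => p.1 ∪ p.2)
    (fun p _ => Finset.mem_univ (p.1 ∪ p.2))]
  have hfiber : ∀ γ : Finset (Fin N),
      (∑ p ∈ (Finset.univ ×ˢ Finset.univ).filter
          (fun p : Finset (Fin N) × Finset (Fin N) => p.1 ∪ p.2 = γ),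
        (-(1:ℂ)/2) ^ p.2.card * f (p.1 ∪ p.2))
      = (if γ = ∅ then 1 else 0) * f γ := by
    intro γ
    have hstep : (∑ p ∈ (Finset.univ ×ˢ Finset.univ).filter
          (fun p : Finset (Fin N) × Finset (Fin N) => p.1 ∪ p.2 = γ),
        (-(1:ℂ)/2) ^ p.2.card * f (p.1 ∪ p.2))
        = ∑ p ∈ (Finset.univ ×ˢ Finset.univ).filter
            (fun p : Finset (Fin N) × Finset (Fin N) => p.1 ∪ p.2 = γ),
          (-(1:ℂ)/2) ^ p.2.card * f γ := by
      refine Finset.sum_congr rfl fun p hp => ?_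
      rw [(Finset.mem_filter.1 hp).2]
    rw [hstep, ← Finset.sum_mul]
    congr 1
    -- reindex by (β, s) ↦ ((γ \ β) ∪ s, β)
    have hbij : (∑ p ∈ (Finset.univ ×ˢ Finset.univ).filter
          (fun p : Finset (Fin N) × Finset (Fin N) => p.1 ∪ p.2 = γ),
        (-(1:ℂ)/2) ^ p.2.card)
        = ∑ q ∈ γ.powerset.sigma (fun β => β.powerset),
            (-(1:ℂ)/2) ^ q.1.card := by
      refine (Finset.sum_bij'
        (fun p _ => (⟨p.2, p.1 ∩ p.2⟩ : Σ _ : Finset (Fin N), Finset (Fin N)))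
        (fun q _ => ((γ \ q.1) ∪ q.2, q.1)) ?_ ?_ ?_ ?_ ?_)
      · intro p hp
        obtain ⟨-, hun⟩ := Finset.mem_filter.1 hp
        refine Finset.mem_sigma.2 ⟨Finset.mem_powerset.2 ?_, Finset.mem_powerset.2
          Finset.inter_subset_right⟩
        rw [← hun]; exact Finset.subset_union_right
      · intro q hq
        obtain ⟨hq1, hq2⟩ := Finset.mem_sigma.1 hq
        rw [Finset.mem_powerset] at hq1 hq2
        refine Finset.mem_filter.2 ⟨Finset.mem_product.2 ⟨Finset.mem_univ _,
          Finset.mem_univ _⟩, ?_⟩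
        rw [Finset.union_assoc, Finset.union_eq_right.2 hq2,
          Finset.sdiff_union_of_subset hq1]
      · intro p hp
        obtain ⟨-, hun⟩ := Finset.mem_filter.1 hp
        obtain ⟨p1, p2⟩ := p
        dsimp only at hun ⊢
        have h1 : γ \ p2 = p1 \ p2 := by rw [← hun, Finset.union_sdiff_right]
        rw [h1, Finset.sdiff_union_inter]
      · intro q hq
        obtain ⟨hq1, hq2⟩ := Finset.mem_sigma.1 hq
        rw [Finset.mem_powerset] at hq1 hq2
        obtain ⟨q1, q2⟩ := q
        dsimp only at hq1 hq2 ⊢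
        have h1 : ((γ \ q1) ∪ q2) ∩ q1 = q2 := by
          rw [Finset.union_inter_distrib_right, Finset.sdiff_inter_self,
            Finset.empty_union, Finset.inter_eq_left.2 hq2]
        rw [h1]
      · intro p hp
        rfl
    rw [hbij, Finset.sum_sigma]
    have hinner : ∀ β ∈ γ.powerset,
        (∑ _s ∈ β.powerset, (-(1:ℂ)/2) ^ β.card) = (-(1:ℂ)) ^ β.card := by
      intro β _
      rw [Finset.sum_const, Finset.card_powerset, nsmul_eq_mul]
      push_cast
      rw [← mul_pow]
      norm_num
    rw [Finset.sum_congr rfl hinner]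
    have := Finset.sum_powerset_neg_one_pow_card (x := γ)
    have hcast : (∑ m ∈ γ.powerset, (-1 : ℂ) ^ m.card)
        = ((∑ m ∈ γ.powerset, (-1 : ℤ) ^ m.card : ℤ) : ℂ) := by push_cast; rfl
    rw [hcast, this]
    split_ifs <;> simp
  rw [Finset.sum_congr rfl fun γ _ => hfiber γ]
  simp [ite_mul]

lemma comb' {N : ℕ} (f : Finset (Fin N) → ℂ) :
    ∑ α : Finset (Fin N), ∑ β : Finset (Fin N),
      (-(1:ℂ)/2) ^ α.card * f (α ∪ β) = f ∅ := by
  rw [Finset.sum_comm]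
  simp_rw [Finset.union_comm]
  exact comb f

lemma partialIntegral_empty (u : (Fin N → ℝ) → ℂ) (k : Fin N → ℝ) :
    partialIntegral (∅ : Finset (Fin N)) u k = u k := by
  rw [partialIntegral_def']
  simp only [Function.updateFinset_empty]
  rw [integral_const]
  simp

end Aux

/-- the operator `𝒜u = Σ_{α ⊆ {1,...,N}} ∫_{[0,1)^{|α|}} u dx_α`
is invertible, with inverse `Σ_α (−1/2)^{|α|} ∫_{[0,1)^{|α|}} · dx_α`. -/
theorem stmt_13 (N : ℕ) (hN : 0 < N)
    (𝒜 ℬ : Lp ℂ 2 (cubeMeasure (Fin N)) →L[ℂ] Lp ℂ 2 (cubeMeasure (Fin N)))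
    (h𝒜 : ∀ u : Lp ℂ 2 (cubeMeasure (Fin N)),
      ⇑(𝒜 u) =ᵐ[cubeMeasure (Fin N)] fun k =>
        ∑ α : Finset (Fin N), partialIntegral α (⇑u) k)
    (hℬ : ∀ u : Lp ℂ 2 (cubeMeasure (Fin N)),
      ⇑(ℬ u) =ᵐ[cubeMeasure (Fin N)] fun k =>
        ∑ α : Finset (Fin N), (-(1:ℂ)/2) ^ α.card * partialIntegral α (⇑u) k) :
    𝒜 * ℬ = 1 ∧ ℬ * 𝒜 = 1 := by
  classical
  have hint : ∀ u : Lp ℂ 2 (cubeMeasure (Fin N)), Integrable (⇑u) (cubeMeasure (Fin N)) :=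
    fun u => (Lp.memLp u).integrable (by norm_num)
  constructor
  · refine ContinuousLinearMap.ext fun u => ?_
    rw [ContinuousLinearMap.mul_apply, ContinuousLinearMap.one_apply]
    refine Lp.ext ?_
    have h3 : ∀ α : Finset (Fin N),
        (fun k => partialIntegral α (⇑(ℬ u)) k) =ᵐ[cubeMeasure (Fin N)]
          fun k => ∑ β : Finset (Fin N),
            (-(1:ℂ)/2) ^ β.card * partialIntegral (α ∪ β) (⇑u) k :=
      fun α => partialIntegral_sum_ae (⇑u) (hint u) _ (⇑(ℬ u)) (hℬ u) α
    have h4 : ∀ᵐ k ∂cubeMeasure (Fin N), ∀ α : Finset (Fin N),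
        partialIntegral α (⇑(ℬ u)) k = ∑ β : Finset (Fin N),
          (-(1:ℂ)/2) ^ β.card * partialIntegral (α ∪ β) (⇑u) k :=
      ae_all_iff.2 h3
    filter_upwards [h𝒜 (ℬ u), h4] with k hk1 hk2
    rw [hk1]
    calc (∑ α : Finset (Fin N), partialIntegral α (⇑(ℬ u)) k)
        = ∑ α : Finset (Fin N), ∑ β : Finset (Fin N),
            (-(1:ℂ)/2) ^ β.card * partialIntegral (α ∪ β) (⇑u) k :=
          Finset.sum_congr rfl fun α _ => hk2 α
      _ = partialIntegral (∅ : Finset (Fin N)) (⇑u) k :=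
          comb (fun γ => partialIntegral γ (⇑u) k)
      _ = u k := partialIntegral_empty (⇑u) k
  · refine ContinuousLinearMap.ext fun u => ?_
    rw [ContinuousLinearMap.mul_apply, ContinuousLinearMap.one_apply]
    refine Lp.ext ?_
    have hAu : ⇑(𝒜 u) =ᵐ[cubeMeasure (Fin N)]
        fun k => ∑ β : Finset (Fin N), (1:ℂ) * partialIntegral β (⇑u) k :=
      (h𝒜 u).trans (Filter.Eventually.of_forall fun k => by simp)
    have h3 : ∀ α : Finset (Fin N),
        (fun k => partialIntegral α (⇑(𝒜 u)) k) =ᵐ[cubeMeasure (Fin N)]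
          fun k => ∑ β : Finset (Fin N),
            (1:ℂ) * partialIntegral (α ∪ β) (⇑u) k :=
      fun α => partialIntegral_sum_ae (⇑u) (hint u) _ (⇑(𝒜 u)) hAu α
    have h4 : ∀ᵐ k ∂cubeMeasure (Fin N), ∀ α : Finset (Fin N),
        partialIntegral α (⇑(𝒜 u)) k = ∑ β : Finset (Fin N),
          (1:ℂ) * partialIntegral (α ∪ β) (⇑u) k :=
      ae_all_iff.2 h3
    filter_upwards [hℬ (𝒜 u), h4] with k hk1 hk2
    rw [hk1]
    calc (∑ α : Finset (Fin N), (-(1:ℂ)/2) ^ α.card * partialIntegral α (⇑(𝒜 u)) k)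
        = ∑ α : Finset (Fin N), ∑ β : Finset (Fin N),
            (-(1:ℂ)/2) ^ α.card * partialIntegral (α ∪ β) (⇑u) k := by
          refine Finset.sum_congr rfl fun α _ => ?_
          rw [hk2 α, Finset.mul_sum]
          exact Finset.sum_congr rfl fun β _ => by ring
      _ = partialIntegral (∅ : Finset (Fin N)) (⇑u) k :=
          comb' (fun γ => partialIntegral γ (⇑u) k)
      _ = u k := partialIntegral_empty (⇑u) k
end
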